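/- arXiv:0706.1788 — 5 statements merged into one kernel-verified Lean document; each statement's English description precedes it below -/
import Mathlib

section
/- Let ε, η > 0, let k ≥ 1 be an integer, let I ⊆ ℝ be an interval (not necessarily compact), and let f : I → ℝ be a C^k function satisfying |f^{(k)}(x)| ≥ η for all x ∈ I. Then the Lebesgue measure of the set {x ∈ I : |f(x)| ≤ ε} is at most 2^{k+1} (ε/η)^{1/k}. -/
open MeasureTheory Set Polynomial Finset

lemma IL_polyEval_contDiff (p : Polynomial ℝ) {n : WithTop ℕ∞} :
    ContDiff ℝ n fun x : ℝ => p.eval x := by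
  have h : (fun x : ℝ => p.eval x)
      = fun x => ∑ i ∈ Finset.range (p.natDegree + 1), p.coeff i * x ^ i := by
    funext x; exact p.eval_eq_sum_range x
  rw [h]
  exact ContDiff.sum fun i _ => contDiff_const.mul (contDiff_id.pow i)

lemma IL_iterDeriv_poly (n : ℕ) : ∀ p : Polynomial ℝ,
    iteratedDeriv n (fun x => p.eval x) = fun x => (Polynomial.derivative^[n] p).eval x := by
  induction n with
  | zero => intro p; simp
  | succ n ih =>
    intro p
    rw [iteratedDeriv_succ']
    have h : deriv (fun x : ℝ => p.eval x) = fun x => (Polynomial.derivative p).eval x := by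
      funext x; exact p.deriv
    rw [h, ih, Function.iterate_succ_apply]

lemma IL_within_nhds {n : ℕ} {f : ℝ → ℝ} {s : Set ℝ} {x : ℝ} (hs : s ∈ nhds x) :
    iteratedDerivWithin n f s x = iteratedDeriv n f x := by
  rw [iteratedDerivWithin_eq_iteratedFDerivWithin, iteratedDeriv_eq_iteratedFDeriv,
    ← iteratedFDerivWithin_univ]
  have h := iteratedFDerivWithin_inter (𝕜 := ℝ) (f := f) (s := Set.univ) (n := n) hs
  rw [Set.univ_inter] at h
  rw [h]

lemma IL_iterRolle : ∀ (k : ℕ) (g : ℝ → ℝ) (x : ℕ → ℝ), StrictMono x →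
    ContinuousOn g (Set.Icc (x 0) (x (k+1))) →
    (∀ y ∈ Set.Ioo (x 0) (x (k+1)), ContDiffAt ℝ (k+1) g y) →
    (∀ i ≤ k+1, g (x i) = 0) →
    ∃ ξ ∈ Set.Ioo (x 0) (x (k+1)), iteratedDeriv (k+1) g ξ = 0 := by
  intro k
  induction k with
  | zero =>
    intro g x hx hc _ h0
    obtain ⟨c, hc1, hc2⟩ := exists_deriv_eq_zero (hx Nat.zero_lt_one) hc
      (by rw [h0 0 (by norm_num), h0 1 (by norm_num)])
    exact ⟨c, hc1, by rwa [iteratedDeriv_one]⟩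
  | succ k ih =>
    intro g x hx hc hd h0
    have hroll : ∀ i : ℕ, i ≤ k + 1 → ∃ y ∈ Set.Ioo (x i) (x (i+1)), deriv g y = 0 := by
      intro i hi
      refine exists_deriv_eq_zero (hx (Nat.lt_succ_self i)) (hc.mono ?_)
        (by rw [h0 i (le_trans hi (Nat.le_succ _)), h0 (i+1) (Nat.succ_le_succ hi)])
      exact Set.Icc_subset_Icc (hx.monotone (Nat.zero_le _))
        (hx.monotone (Nat.succ_le_succ hi))
    choose r hr hr0 using hroll
    set y : ℕ → ℝ := fun i => if h : i ≤ k + 1 then r i h else x (i+1) with hy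
    have hyIoo : ∀ i (h : i ≤ k+1), y i = r i h := by
      intro i h; simp only [hy]; rw [dif_pos h]
    have hyTop : ∀ i, k+1 < i → y i = x (i+1) := by
      intro i h; simp only [hy]; rw [dif_neg (by omega)]
    have hymono : StrictMono y := by
      apply strictMono_nat_of_lt_succ
      intro i
      rcases le_or_gt (i+1) (k+1) with h1 | h1
      · rw [hyIoo i (le_trans (Nat.le_succ _) h1), hyIoo (i+1) h1]
        exact lt_trans (hr i _).2 (hr (i+1) h1).1
      · rcases le_or_gt i (k+1) with h2 | h2
        · rw [hyIoo i h2, hyTop (i+1) h1]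
          exact lt_trans (hr i h2).2 (hx (Nat.lt_succ_self _))
        · rw [hyTop i h2, hyTop (i+1) h1]
          exact hx (Nat.lt_succ_self _)
    have hsub : Set.Icc (y 0) (y (k+1)) ⊆ Set.Ioo (x 0) (x (k+2)) := by
      have h1 : x 0 < y 0 := by rw [hyIoo 0 (Nat.zero_le _)]; exact (hr 0 _).1
      have h2 : y (k+1) < x (k+2) := by rw [hyIoo (k+1) le_rfl]; exact (hr (k+1) _).2
      intro z hz
      exact ⟨lt_of_lt_of_le h1 hz.1, lt_of_le_of_lt hz.2 h2⟩
    have hdy : ∀ z ∈ Set.Icc (y 0) (y (k+1)), ContDiffAt ℝ (k+1) (deriv g) z := by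
      intro z hz
      have hz' : z ∈ Set.Ioo (x 0) (x (k+2)) := hsub hz
      obtain ⟨u, hu, hcu⟩ := (hd z hz').contDiffOn le_rfl (by simp)
      obtain ⟨t, htu, hto, hzt⟩ := mem_nhds_iff.mp hu
      have : ContDiffOn ℝ (k+1) (deriv g) t :=
        (hcu.mono htu).deriv_of_isOpen hto (by exact_mod_cast le_rfl)
      exact this.contDiffAt (hto.mem_nhds hzt)
    obtain ⟨ξ, hξ1, hξ2⟩ := ih (deriv g) y hymono
      (fun z hz => ((hdy z hz).continuousAt).continuousWithinAt)
      (fun z hz => hdy z (Set.Ioo_subset_Icc_self hz))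
      (fun i hi => by rw [hyIoo i hi]; exact hr0 i hi)
    refine ⟨ξ, hsub (Set.Ioo_subset_Icc_self hξ1), ?_⟩
    rw [iteratedDeriv_succ']
    exact hξ2

lemma IL_divMVT (m : ℕ) (f : ℝ → ℝ) (x : ℕ → ℝ) (hx : StrictMono x)
    (hc : ContinuousOn f (Set.Icc (x 0) (x (m+1))))
    (hd : ∀ y ∈ Set.Ioo (x 0) (x (m+1)), ContDiffAt ℝ (m+1) f y) :
    ∃ ξ ∈ Set.Ioo (x 0) (x (m+1)), iteratedDeriv (m+1) f ξ =
      (Nat.factorial (m+1) : ℝ) * ∑ i ∈ Finset.range (m+2), f (x i) *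
        ∏ j ∈ (Finset.range (m+2)).erase i, (x i - x j)⁻¹ := by
  have hinj : Set.InjOn x ↑(Finset.range (m+2)) := hx.injective.injOn
  set P := Lagrange.interpolate (Finset.range (m+2)) x (fun i => f (x i)) with hP
  have hdeg : P.natDegree ≤ m + 1 := by
    by_cases hP0 : P = 0
    · simp [hP0]
    · have h := Lagrange.degree_interpolate_lt (s := Finset.range (m+2)) (v := x)
        (fun i => f (x i)) hinj
      rw [Finset.card_range] at h
      exact Nat.lt_succ_iff.mp ((Polynomial.natDegree_lt_iff_degree_lt hP0).mpr
        (by exact_mod_cast h))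
  have hbasis : ∀ i ∈ Finset.range (m+2), (Lagrange.basis (Finset.range (m+2)) x i).coeff (m+1)
      = ∏ j ∈ (Finset.range (m+2)).erase i, (x i - x j)⁻¹ := by
    intro i hi
    rw [Lagrange.basis]
    have hdef : ∀ j ∈ (Finset.range (m+2)).erase i,
        Lagrange.basisDivisor (x i) (x j) = C (x i - x j)⁻¹ * (X - C (x j)) := fun j _ => rfl
    rw [Finset.prod_congr rfl hdef, Finset.prod_mul_distrib, ← map_prod]
    set Q : Polynomial ℝ := ∏ j ∈ (Finset.range (m+2)).erase i, (X - C (x j)) with hQ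
    have hQm : Q.Monic := monic_prod_of_monic _ _ (fun j _ => monic_X_sub_C _)
    have hQd : Q.natDegree = m + 1 := by
      rw [hQ, natDegree_prod _ _ (fun j _ => Polynomial.X_sub_C_ne_zero _)]
      · simp [Finset.card_erase_of_mem hi]
    rw [coeff_C_mul, ← hQd, hQm.coeff_natDegree, mul_one]
  have hcoeff : P.coeff (m+1) = ∑ i ∈ Finset.range (m+2), f (x i) *
      ∏ j ∈ (Finset.range (m+2)).erase i, (x i - x j)⁻¹ := by
    rw [hP, Lagrange.interpolate_apply, Polynomial.finset_sum_coeff]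
    exact Finset.sum_congr rfl fun i hi => by rw [coeff_C_mul, hbasis i hi]
  have hCder : Polynomial.derivative^[m+1] P = C ((Nat.factorial (m+1) : ℝ) * P.coeff (m+1)) := by
    have h1 : (Polynomial.derivative^[m+1] P).natDegree = 0 :=
      Nat.le_zero.mp (le_trans (P.natDegree_iterate_derivative (m+1)) (by omega))
    have h2 := Polynomial.eq_C_of_natDegree_eq_zero h1
    rw [h2, Polynomial.coeff_iterate_derivative P 0]
    simp only [Nat.zero_add, zero_add, Nat.descFactorial_self, nsmul_eq_mul]
  set g : ℝ → ℝ := f - fun t => P.eval t with hg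
  have hg0 : ∀ i ≤ m+1, g (x i) = 0 := by
    intro i hi
    have : P.eval (x i) = f (x i) :=
      Lagrange.eval_interpolate_at_node (fun i => f (x i)) hinj
        (Finset.mem_range.mpr (Nat.lt_succ_of_le hi))
    simp [hg, this]
  obtain ⟨ξ, hξ, h0⟩ := IL_iterRolle m g x hx
    (hc.sub ((IL_polyEval_contDiff (n := 0) P).continuous.continuousOn))
    (fun y hy => (hd y hy).sub ((IL_polyEval_contDiff (n := ((m : WithTop ℕ∞)+1)) P).contDiffAt))
    hg0
  refine ⟨ξ, hξ, ?_⟩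
  have hUo : IsOpen (Set.Ioo (x 0) (x (m+1))) := isOpen_Ioo
  have hfU : ContDiffOn ℝ ((m+1 : ℕ) : WithTop ℕ∞) f (Set.Ioo (x 0) (x (m+1))) :=
    fun y hy => ((hd y hy).of_le (by norm_cast)).contDiffWithinAt
  have hpU : ContDiffOn ℝ (m+1) (fun t => P.eval t) (Set.Ioo (x 0) (x (m+1))) :=
    (IL_polyEval_contDiff (n := ((m+1 : ℕ) : WithTop ℕ∞)) P).contDiffOn
  have hsplit := iteratedDerivWithin_sub (n := m+1) hξ hUo.uniqueDiffOn (hfU ξ hξ) (hpU ξ hξ)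
  rw [IL_within_nhds (hUo.mem_nhds hξ), IL_within_nhds (hUo.mem_nhds hξ),
    IL_within_nhds (hUo.mem_nhds hξ), ← hg, h0] at hsplit
  have : iteratedDeriv (m+1) f ξ = iteratedDeriv (m+1) (fun t => P.eval t) ξ := by
    linarith [hsplit]
  rw [this, IL_iterDeriv_poly, hCder, ← hcoeff]
  simp

lemma IL_extract (E : Set ℝ) (k : ℕ) (d : ℝ) (hd : 0 < d)
    (hm : ENNReal.ofReal ((k+1)*d) ≤ volume E) :
    ∃ x : ℕ → ℝ, StrictMono x ∧ (∀ i ≤ k, x i ∈ closure E) ∧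
      (∀ i ≤ k, (∃ p ∈ E, p ≤ x i) ∧ (∃ q ∈ E, x i ≤ q)) ∧
      (∀ i, d ≤ x (i+1) - x i) := by
  set t : ℕ → ℝ := fun i => ((i : ℝ) + 1/2) * d with ht
  have htmono : ∀ i j : ℕ, i ≤ j → t i ≤ t j := by
    intro i j hij
    have : (i:ℝ) ≤ j := Nat.cast_le.mpr hij
    simp only [ht]; nlinarith
  have htpos : ∀ i : ℕ, 0 < t i := by
    intro i; simp only [ht]; positivity
  -- find a bounded piece F of E with measure > t k
  have hlt : ENNReal.ofReal (t k) < volume E := by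
    refine lt_of_lt_of_le ?_ hm
    apply ENNReal.ofReal_lt_ofReal_iff_of_nonneg (le_of_lt (htpos k)) |>.mpr
    simp only [ht]; nlinarith [hd]
  have hmonoF : Monotone (fun n : ℕ => E ∩ Set.Icc (-(n:ℝ)) n) := by
    intro a b hab
    apply Set.inter_subset_inter_right
    apply Set.Icc_subset_Icc <;> simp [Nat.cast_le.mpr hab] <;> linarith [Nat.cast_le.mpr hab]
  have hUn : ⋃ n : ℕ, (E ∩ Set.Icc (-(n:ℝ)) n) = E := by
    rw [← Set.inter_iUnion]
    refine Set.inter_eq_left.mpr ?_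
    intro e he
    obtain ⟨n, hn⟩ := exists_nat_ge |e|
    exact Set.mem_iUnion.mpr ⟨n, by constructor <;> [linarith [neg_abs_le e]; linarith [le_abs_self e]]⟩
  have htd := MeasureTheory.tendsto_measure_iUnion_atTop (μ := volume) hmonoF
  rw [hUn] at htd
  obtain ⟨N, hN⟩ := (Filter.Tendsto.eventually_const_lt hlt htd).exists
  set F := E ∩ Set.Icc (-(N:ℝ)) N with hF
  have hFE : F ⊆ E := Set.inter_subset_left
  have hFfin : volume F ≠ ⊤ := by
    refine ne_top_of_le_ne_top ?_ (measure_mono Set.inter_subset_right)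
    rw [Real.volume_Icc]; exact ENNReal.ofReal_ne_top
  set M : ℝ := (volume F).toReal with hM
  have htkM : t k < M := by
    have hN' : ENNReal.ofReal (t k) < volume F := hN
    rw [← ENNReal.ofReal_toReal hFfin] at hN'
    exact (ENNReal.ofReal_lt_ofReal_iff_of_nonneg (le_of_lt (htpos k))).mp hN'
  set g : ℝ → ℝ := fun x => (volume (F ∩ Set.Iic x)).toReal with hg
  have hgfin : ∀ x, volume (F ∩ Set.Iic x) ≠ ⊤ :=
    fun x => ne_top_of_le_ne_top hFfin (measure_mono Set.inter_subset_left)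
  have hgmono : Monotone g := by
    intro a b hab
    exact ENNReal.toReal_mono (hgfin b)
      (measure_mono (Set.inter_subset_inter_right _ (Set.Iic_subset_Iic.mpr hab)))
  have hglip : ∀ a b : ℝ, a ≤ b → g b ≤ g a + (b - a) := by
    intro a b hab
    have hsub : F ∩ Set.Iic b ⊆ (F ∩ Set.Iic a) ∪ Set.Ioc a b := by
      rintro z ⟨hz1, hz2⟩
      rcases le_or_gt z a with h | h
      · exact Or.inl ⟨hz1, h⟩
      · exact Or.inr ⟨h, hz2⟩
    have h1 : volume (F ∩ Set.Iic b) ≤ volume (F ∩ Set.Iic a) + ENNReal.ofReal (b - a) := by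
      calc volume (F ∩ Set.Iic b) ≤ volume ((F ∩ Set.Iic a) ∪ Set.Ioc a b) := measure_mono hsub
        _ ≤ volume (F ∩ Set.Iic a) + volume (Set.Ioc a b) := measure_union_le _ _
        _ = volume (F ∩ Set.Iic a) + ENNReal.ofReal (b - a) := by rw [Real.volume_Ioc]
    have h2 := ENNReal.toReal_mono (by
      exact ENNReal.add_ne_top.mpr ⟨hgfin a, ENNReal.ofReal_ne_top⟩) h1
    rw [ENNReal.toReal_add (hgfin a) ENNReal.ofReal_ne_top,
      ENNReal.toReal_ofReal (by linarith)] at h2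
    exact h2
  have hgcont : Continuous g := by
    have : LipschitzWith 1 g := by
      apply LipschitzWith.of_dist_le_mul
      intro a b
      rw [Real.dist_eq, Real.dist_eq, NNReal.coe_one, one_mul]
      rcases le_total a b with h | h
      · rw [abs_sub_comm, abs_of_nonneg (by exact sub_nonneg.mpr (hgmono h)),
          abs_of_nonpos (by linarith)]
        have := hglip a b h; linarith
      · rw [abs_of_nonneg (sub_nonneg.mpr (hgmono h)), abs_of_nonneg (by linarith)]
        have := hglip b a h; linarith
    exact this.continuous
  have hg0 : g (-(N:ℝ)-1) = 0 := by
    have : F ∩ Set.Iic (-(N:ℝ)-1) = ∅ := by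
      ext z
      simp only [Set.mem_inter_iff, Set.mem_empty_iff_false, iff_false, not_and, hF]
      rintro ⟨_, hz2, _⟩ hz3
      simp only [Set.mem_Iic] at hz3
      linarith
    simp [hg, this]
  have hgN : ∀ z : ℝ, (N:ℝ) ≤ z → g z = M := by
    intro z hz
    have : F ∩ Set.Iic z = F := by
      refine Set.inter_eq_left.mpr ?_
      rintro w ⟨_, _, hw2⟩
      exact le_trans hw2 hz
    rw [hg]; simp only [this, hM]
  -- the key selection
  have key : ∀ ti : ℝ, 0 < ti → ti < M → ∃ z : ℝ, g z = ti ∧ z ∈ closure F ∧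
      (∃ p ∈ F, p ≤ z) ∧ (∃ q ∈ F, z ≤ q) := by
    intro ti h0 hM'
    set S := {w : ℝ | g w < ti} with hS
    have hne : (-(N:ℝ)-1) ∈ S := by simp only [hS, Set.mem_setOf_eq, hg0]; exact h0
    have hbdd : BddAbove S := by
      refine ⟨N, fun w hw => ?_⟩
      by_contra hcon
      push_neg at hcon
      have := hgN w (le_of_lt hcon)
      simp only [hS, Set.mem_setOf_eq, this] at hw
      linarith
    set z := sSup S with hz
    have hzub : ∀ w ∈ S, w ≤ z := fun w hw => le_csSup hbdd hw
    have hnear : ∀ δ : ℝ, 0 < δ → ∃ s ∈ S, z - δ < s ∧ s ≤ z := by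
      intro δ hδ
      obtain ⟨s, hs1, hs2⟩ := exists_lt_of_lt_csSup ⟨_, hne⟩ (by linarith : z - δ < z)
      exact ⟨s, hs1, hs2, hzub s hs1⟩
    have hgz_le : g z ≤ ti := by
      apply le_of_forall_pos_le_add
      intro δ hδ
      obtain ⟨s, hs, hs1, hs2⟩ := hnear δ hδ
      have := hglip s z hs2
      have hgs : g s < ti := hs
      linarith
    have hgz_ge : ti ≤ g z := by
      by_contra hcon
      push_neg at hcon
      have hopen : IsOpen S := isOpen_Iio.preimage hgcont
      obtain ⟨ρ, hρ, hball⟩ := Metric.isOpen_iff.mp hopen z hcon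
      have hball2 : z + ρ/2 ∈ Metric.ball z ρ := by
        rw [Metric.mem_ball, Real.dist_eq, abs_of_nonneg (by linarith)]; linarith
      have := hzub _ (hball hball2)
      linarith
    have hgz : g z = ti := le_antisymm hgz_le hgz_ge
    -- points of F just below z
    have hlower : ∀ δ : ℝ, 0 < δ → ∃ p ∈ F, z - δ < p ∧ p ≤ z := by
      intro δ hδ
      obtain ⟨s, hs, hs1, hs2⟩ := hnear δ hδ
      have hgs : g s < ti := hs
      have hsub2 : F ∩ Set.Iic z ⊆ (F ∩ Set.Iic s) ∪ (F ∩ Set.Ioc s z) := by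
        rintro w ⟨hw1, hw2⟩
        rcases le_or_gt w s with h | h
        · exact Or.inl ⟨hw1, h⟩
        · exact Or.inr ⟨hw1, h, hw2⟩
      have hpos : volume (F ∩ Set.Ioc s z) ≠ 0 := by
        intro hzero
        have h1 : volume (F ∩ Set.Iic z) ≤ volume (F ∩ Set.Iic s) := by
          calc volume (F ∩ Set.Iic z) ≤ volume (F ∩ Set.Iic s) + volume (F ∩ Set.Ioc s z) :=
              le_trans (measure_mono hsub2) (measure_union_le _ _)
            _ = volume (F ∩ Set.Iic s) := by rw [hzero, add_zero]
        have h2 := ENNReal.toReal_mono (hgfin s) h1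
        have h3 : g z ≤ g s := h2
        linarith [hgz, h3]
      obtain ⟨p, hp1, hp2⟩ := MeasureTheory.nonempty_of_measure_ne_zero hpos
      exact ⟨p, hp1, by linarith [hp2.1], hp2.2⟩
    have hclos : z ∈ closure F := by
      rw [Metric.mem_closure_iff]
      intro δ hδ
      obtain ⟨p, hp, hp1, hp2⟩ := hlower δ hδ
      exact ⟨p, hp, by rw [Real.dist_eq]; rw [abs_of_nonneg (by linarith)]; linarith⟩
    have hupper : ∃ q ∈ F, z ≤ q := by
      have hsub3 : F ⊆ (F ∩ Set.Iic z) ∪ (F ∩ Set.Ioi z) := by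
        intro w hw
        rcases le_or_gt w z with h | h
        · exact Or.inl ⟨hw, h⟩
        · exact Or.inr ⟨hw, h⟩
      have hpos : volume (F ∩ Set.Ioi z) ≠ 0 := by
        intro hzero
        have h1 : volume F ≤ volume (F ∩ Set.Iic z) + volume (F ∩ Set.Ioi z) :=
          le_trans (measure_mono hsub3) (measure_union_le _ _)
        rw [hzero, add_zero] at h1
        have h2 := ENNReal.toReal_mono (hgfin z) h1
        have h3 : M ≤ g z := h2
        linarith [hgz]
      obtain ⟨q, hq1, hq2⟩ := MeasureTheory.nonempty_of_measure_ne_zero hpos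
      exact ⟨q, hq1, le_of_lt hq2⟩
    obtain ⟨p, hp, _, hp2⟩ := hlower 1 one_pos
    exact ⟨z, hgz, hclos, ⟨p, hp, hp2⟩, hupper⟩
  -- choose points
  have keyi : ∀ i : ℕ, ∃ z : ℝ, g z = t (min i k) ∧ z ∈ closure F ∧
      (∃ p ∈ F, p ≤ z) ∧ (∃ q ∈ F, z ≤ q) :=
    fun i => key (t (min i k)) (htpos _) (lt_of_le_of_lt (htmono _ _ (min_le_right i k)) htkM)
  choose Z hZg hZc hZp hZq using keyi
  have hZmin : ∀ i ≤ k, g (Z i) = t i := by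
    intro i hi; rw [hZg i, min_eq_left hi]
  -- strict gap between consecutive Z's below k
  have hZgap : ∀ i j : ℕ, i ≤ k → j ≤ k → i < j → t j - t i ≤ Z j - Z i := by
    intro i j hik hjk hij
    have h1 : g (Z i) = t i := hZmin i hik
    have h2 : g (Z j) = t j := hZmin j hjk
    have htij : t i < t j := by
      simp only [ht]
      have : (i:ℝ) < j := Nat.cast_lt.mpr hij
      nlinarith
    have hZij : Z i ≤ Z j := by
      by_contra hcon
      push_neg at hcon
      have := hgmono (le_of_lt hcon)
      rw [h1, h2] at this
      linarith
    have := hglip (Z i) (Z j) hZij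
    rw [h1, h2] at this
    linarith
  set x : ℕ → ℝ := fun i => if i ≤ k then Z i else Z k + ((i:ℝ) - k) * d with hx
  have hxlow : ∀ i, i ≤ k → x i = Z i := by
    intro i h; simp only [hx]; rw [if_pos h]
  have hxhigh : ∀ i, k < i → x i = Z k + ((i:ℝ) - k) * d := by
    intro i h; simp only [hx]; rw [if_neg (by omega)]
  have hgap : ∀ i, d ≤ x (i+1) - x i := by
    intro i
    rcases le_or_gt (i+1) k with h1 | h1
    · rw [hxlow i (by omega), hxlow (i+1) h1]
      have := hZgap i (i+1) (by omega) h1 (by omega)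
      have ht' : t (i+1) - t i = d := by simp only [ht]; push_cast; ring
      linarith
    · rcases le_or_gt i k with h2 | h2
      · have hik : i = k := by omega
        subst hik
        rw [hxlow i le_rfl, hxhigh (i+1) (by omega)]
        push_cast; ring_nf; nlinarith [hd]
      · rw [hxhigh i h2, hxhigh (i+1) (by omega)]
        push_cast; ring_nf; nlinarith [hd]
  have hxmono : StrictMono x := by
    apply strictMono_nat_of_lt_succ
    intro i
    have := hgap i
    linarith
  refine ⟨x, hxmono, ?_, ?_, hgap⟩
  · intro i hi
    rw [hxlow i hi]
    exact closure_mono hFE (hZc i)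
  · intro i hi
    rw [hxlow i hi]
    obtain ⟨p, hp1, hp2⟩ := hZp i
    obtain ⟨q, hq1, hq2⟩ := hZq i
    exact ⟨⟨p, hFE hp1, hp2⟩, ⟨q, hFE hq1, hq2⟩⟩

lemma IL_fact_le (m : ℕ) : Nat.factorial (m+1) ≤ (m+1)^m := by
  induction m with
  | zero => simp
  | succ m ih =>
    calc Nat.factorial (m+2) = (m+2) * Nat.factorial (m+1) := rfl
      _ ≤ (m+2) * (m+1)^m := Nat.mul_le_mul_left _ ih
      _ ≤ (m+2) * (m+2)^m := Nat.mul_le_mul_left _ (Nat.pow_le_pow_left (by omega) m)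
      _ = (m+2)^(m+1) := (pow_succ' _ _).symm

lemma IL_sq_le (k : ℕ) (h : 3 ≤ k) : (k+1)^2 ≤ 2^(k+1) := by
  induction k, h using Nat.le_induction with
  | base => norm_num
  | succ k hk ih =>
    have h1 : (k+2)^2 ≤ 2*(k+1)^2 := by nlinarith
    calc (k+2)^2 ≤ 2*(k+1)^2 := h1
      _ ≤ 2*2^(k+1) := Nat.mul_le_mul_left _ ih
      _ = 2^(k+2) := by ring

lemma IL_natA (k : ℕ) (hk : 1 ≤ k) : (k+1)^k * Nat.factorial (k+1) ≤ 2^(k*(k+1)) := by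
  match k, hk with
  | 1, _ => norm_num [Nat.factorial]
  | 2, _ => norm_num [Nat.factorial]
  | (n+3), _ =>
    set k := n + 3 with hkdef
    have h1 : Nat.factorial (k+1) ≤ (k+1)^k := IL_fact_le k
    calc (k+1)^k * Nat.factorial (k+1) ≤ (k+1)^k * (k+1)^k := Nat.mul_le_mul_left _ h1
      _ = ((k+1)^2)^k := by rw [← pow_mul, ← pow_add]; ring_nf
      _ ≤ (2^(k+1))^k := Nat.pow_le_pow_left (IL_sq_le k (by omega)) k
      _ = 2^(k*(k+1)) := by rw [← pow_mul, Nat.mul_comm]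

/-- **Interval Lemma.** If `f` is `C^k` on an interval `I ⊆ ℝ` and its `k`-th derivative
is bounded below in absolute value by `η > 0` on `I`, then the Lebesgue measure of
`{x ∈ I : |f x| ≤ ε}` is at most `2^(k+1) (ε/η)^(1/k)`. -/
theorem stmt_0 (ε η : ℝ) (hε : 0 < ε) (hη : 0 < η) (k : ℕ) (hk : 1 ≤ k)
    (I : Set ℝ) (hI : I.OrdConnected) (f : ℝ → ℝ)
    (hf : ContDiffOn ℝ k f I)
    (hder : ∀ x ∈ I, η ≤ |iteratedDerivWithin k f I x|) :
    volume {x ∈ I | |f x| ≤ ε} ≤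
      ENNReal.ofReal (2 ^ (k + 1) * (ε / η) ^ ((1 : ℝ) / k)) := by
  by_contra hcon
  rw [not_le] at hcon
  set E := {x ∈ I | |f x| ≤ ε} with hE
  set B : ℝ := 2 ^ (k + 1) * (ε / η) ^ ((1 : ℝ) / k) with hB
  have hρ : (0:ℝ) < (ε/η) ^ ((1:ℝ)/k) := Real.rpow_pos_of_pos (div_pos hε hη) _
  have hBpos : 0 < B := by rw [hB]; positivity
  -- choose a good gap size d
  obtain ⟨d, hd0, hdB, hmd⟩ : ∃ d : ℝ, 0 < d ∧ B < ((k:ℝ)+1)*d ∧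
      ENNReal.ofReal (((k:ℝ)+1)*d) ≤ volume E := by
    rcases eq_or_ne (volume E) ⊤ with h | h
    · refine ⟨(B+1)/((k:ℝ)+1), by positivity, ?_, by rw [h]; exact le_top⟩
      rw [mul_div_cancel₀ _ (by positivity : ((k:ℝ)+1) ≠ 0)]
      linarith
    · have hMB : B < (volume E).toReal := by
        rw [← ENNReal.ofReal_toReal h] at hcon
        exact (ENNReal.ofReal_lt_ofReal_iff_of_nonneg hBpos.le).mp hcon
      refine ⟨(volume E).toReal/((k:ℝ)+1), div_pos (lt_trans hBpos hMB) (by positivity), ?_, ?_⟩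
      · rw [mul_div_cancel₀ _ (by positivity : ((k:ℝ)+1) ≠ 0)]
        exact hMB
      · rw [mul_div_cancel₀ _ (by positivity : ((k:ℝ)+1) ≠ 0),
          ENNReal.ofReal_toReal h]
  obtain ⟨x, hxmono, hxcl, hxpq, hxgap⟩ := IL_extract E k d hd0 hmd
  have hEI : E ⊆ I := fun z hz => hz.1
  have hxI : ∀ i, i ≤ k → x i ∈ I := by
    intro i hi
    obtain ⟨⟨p, hp, hpz⟩, ⟨q, hq, hzq⟩⟩ := hxpq i hi
    exact hI.out (hEI hp) (hEI hq) ⟨hpz, hzq⟩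
  have hfx : ∀ i, i ≤ k → |f (x i)| ≤ ε := by
    intro i hi
    have hcw : ContinuousWithinAt f E (x i) :=
      ((hf.continuousOn) _ (hxI i hi)).mono hEI
    have h1 : f (x i) ∈ closure (f '' E) := hcw.mem_closure_image (hxcl i hi)
    have h2 : f '' E ⊆ {y : ℝ | |y| ≤ ε} := by rintro _ ⟨w, hw, rfl⟩; exact hw.2
    have h3 : IsClosed {y : ℝ | |y| ≤ ε} :=
      isClosed_le continuous_abs continuous_const
    have h4 : f (x i) ∈ {y : ℝ | |y| ≤ ε} := by
      rw [← h3.closure_eq]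
      exact closure_mono h2 h1
    exact h4
  obtain ⟨m, rfl⟩ : ∃ m, k = m+1 := ⟨k-1, by omega⟩
  have hIccI : Set.Icc (x 0) (x (m+1)) ⊆ I :=
    fun z hz => hI.out (hxI 0 (by omega)) (hxI (m+1) le_rfl) hz
  have hIooInt : Set.Ioo (x 0) (x (m+1)) ⊆ interior I :=
    interior_maximal (subset_trans Set.Ioo_subset_Icc_self hIccI) isOpen_Ioo
  obtain ⟨ξ, hξ, hξeq⟩ := IL_divMVT m f x hxmono (hf.continuousOn.mono hIccI)
    (fun y hy => (hf.contDiffAt (mem_interior_iff_mem_nhds.mp (hIooInt hy))).of_le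
      (by norm_cast))
  have hξI : ξ ∈ I := interior_subset (hIooInt hξ)
  have hηb := hder ξ hξI
  rw [IL_within_nhds (mem_interior_iff_mem_nhds.mp (hIooInt hξ)), hξeq] at hηb
  -- separation of the points
  have base : ∀ n : ℕ, ∀ i, d ≤ x (i+n+1) - x i := by
    intro n
    induction n with
    | zero => intro i; simpa using hxgap i
    | succ n ih =>
      intro i
      have h1 := ih i
      have h2 := hxgap (i+n+1)
      have he : i+(n+1)+1 = (i+n+1)+1 := by omega
      rw [he]
      linarith
  have hsep : ∀ i j : ℕ, i ≠ j → d ≤ |x i - x j| := by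
    have base2 : ∀ i j : ℕ, i < j → d ≤ x j - x i := by
      intro i j hij
      obtain ⟨n, rfl⟩ : ∃ n, j = i+n+1 := ⟨j-i-1, by omega⟩
      exact base n i
    intro i j hne
    rcases lt_or_gt_of_ne hne with h | h
    · rw [abs_sub_comm, abs_of_nonneg (by linarith [base2 i j h])]; exact base2 i j h
    · rw [abs_of_nonneg (by linarith [base2 j i h])]; exact base2 j i h
  -- bound the divided difference sum
  have hprod : ∀ i ∈ Finset.range (m+2),
      |∏ j ∈ (Finset.range (m+2)).erase i, (x i - x j)⁻¹| ≤ (d⁻¹)^(m+1) := by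
    intro i hi
    rw [Finset.abs_prod]
    have hcard : ((Finset.range (m+2)).erase i).card = m+1 := by
      rw [Finset.card_erase_of_mem hi, Finset.card_range]
      omega
    calc ∏ j ∈ (Finset.range (m+2)).erase i, |(x i - x j)⁻¹|
        ≤ ∏ j ∈ (Finset.range (m+2)).erase i, d⁻¹ := by
          refine Finset.prod_le_prod (fun j _ => abs_nonneg _) (fun j hj => ?_)
          rw [abs_inv]
          have hji : j ≠ i := (Finset.mem_erase.mp hj).1
          exact inv_anti₀ hd0 (hsep i j (Ne.symm hji))
      _ = (d⁻¹)^(m+1) := by rw [Finset.prod_const, hcard]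
  have hsum : |∑ i ∈ Finset.range (m+2), f (x i) *
      ∏ j ∈ (Finset.range (m+2)).erase i, (x i - x j)⁻¹|
      ≤ ((m:ℝ)+2) * (ε * (d⁻¹)^(m+1)) := by
    calc |∑ i ∈ Finset.range (m+2), f (x i) *
        ∏ j ∈ (Finset.range (m+2)).erase i, (x i - x j)⁻¹|
        ≤ ∑ i ∈ Finset.range (m+2), |f (x i) *
          ∏ j ∈ (Finset.range (m+2)).erase i, (x i - x j)⁻¹| :=
          Finset.abs_sum_le_sum_abs _ _
      _ ≤ ∑ _i ∈ Finset.range (m+2), ε * (d⁻¹)^(m+1) := by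
          refine Finset.sum_le_sum (fun i hi => ?_)
          rw [abs_mul]
          exact mul_le_mul (hfx i (by
            have := Finset.mem_range.mp hi; omega)) (hprod i hi)
            (abs_nonneg _) hε.le
      _ = ((m:ℝ)+2) * (ε * (d⁻¹)^(m+1)) := by
          rw [Finset.sum_const, Finset.card_range, nsmul_eq_mul]
          push_cast; ring
  -- key inequality
  have h2 : (d⁻¹)^(m+1) * d^(m+1) = 1 := by
    rw [← mul_pow, inv_mul_cancel₀ (ne_of_gt hd0), one_pow]
  have hkey : η * d^(m+1) ≤ (Nat.factorial (m+2) : ℝ) * ε := by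
    have h1 : η ≤ (Nat.factorial (m+1) : ℝ) * (((m:ℝ)+2) * (ε * (d⁻¹)^(m+1))) := by
      calc η ≤ |(Nat.factorial (m+1) : ℝ) * ∑ i ∈ Finset.range (m+2), f (x i) *
            ∏ j ∈ (Finset.range (m+2)).erase i, (x i - x j)⁻¹| := hηb
        _ = (Nat.factorial (m+1) : ℝ) * |∑ i ∈ Finset.range (m+2), f (x i) *
            ∏ j ∈ (Finset.range (m+2)).erase i, (x i - x j)⁻¹| := by
            rw [abs_mul, abs_of_nonneg (by positivity : (0:ℝ) ≤ (Nat.factorial (m+1) : ℝ))]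
        _ ≤ (Nat.factorial (m+1) : ℝ) * (((m:ℝ)+2) * (ε * (d⁻¹)^(m+1))) :=
            mul_le_mul_of_nonneg_left hsum (by positivity)
    have hfc : (Nat.factorial (m+1) : ℝ) * ((m:ℝ)+2) = (Nat.factorial (m+2) : ℝ) := by
      rw [Nat.factorial_succ (m+1)]; push_cast; ring
    calc η * d^(m+1)
        ≤ ((Nat.factorial (m+1) : ℝ) * (((m:ℝ)+2) * (ε * (d⁻¹)^(m+1)))) * d^(m+1) :=
          mul_le_mul_of_nonneg_right h1 (pow_nonneg hd0.le _)
      _ = ((Nat.factorial (m+1) : ℝ) * ((m:ℝ)+2)) * ε * ((d⁻¹)^(m+1) * d^(m+1)) := by ring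
      _ = (Nat.factorial (m+2) : ℝ) * ε := by rw [h2, mul_one, hfc]
  -- conclude
  have hdpow : d^(m+1) ≤ (Nat.factorial (m+2) : ℝ) * ε / η := by
    rw [le_div_iff₀ hη]
    nlinarith [hkey]
  have hA : (((m+2)^(m+1) * Nat.factorial (m+2) : ℕ) : ℝ) ≤ ((2^((m+1)*(m+2)) : ℕ) : ℝ) :=
    Nat.cast_le.mpr (IL_natA (m+1) (by omega))
  have hstep : (((m:ℝ)+2)*d)^(m+1) ≤ ((2:ℝ)^(m+2))^(m+1) * (ε/η) := by
    calc (((m:ℝ)+2)*d)^(m+1) = ((m:ℝ)+2)^(m+1) * d^(m+1) := mul_pow _ _ _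
      _ ≤ ((m:ℝ)+2)^(m+1) * ((Nat.factorial (m+2) : ℝ) * ε / η) :=
          mul_le_mul_of_nonneg_left hdpow (by positivity)
      _ = (((m:ℝ)+2)^(m+1) * (Nat.factorial (m+2) : ℝ)) * (ε/η) := by ring
      _ ≤ ((2:ℝ)^((m+1)*(m+2))) * (ε/η) := by
          refine mul_le_mul_of_nonneg_right ?_ (by positivity)
          push_cast at hA ⊢
          convert hA using 2 <;> push_cast <;> ring
      _ = ((2:ℝ)^(m+2))^(m+1) * (ε/η) := by rw [← pow_mul, Nat.mul_comm]
  have hroot : ((m:ℝ)+2)*d ≤ (2:ℝ)^(m+2) * (ε/η)^(((m+1:ℕ):ℝ))⁻¹ := by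
    have hL : (0:ℝ) ≤ ((m:ℝ)+2)*d := by positivity
    have e1 : ((m:ℝ)+2)*d = ((((m:ℝ)+2)*d)^(m+1)) ^ ((((m+1:ℕ)):ℝ))⁻¹ :=
      (Real.pow_rpow_inv_natCast hL (by omega)).symm
    rw [e1]
    calc ((((m:ℝ)+2)*d)^(m+1)) ^ (((m+1:ℕ)):ℝ)⁻¹
        ≤ (((2:ℝ)^(m+2))^(m+1) * (ε/η)) ^ (((m+1:ℕ)):ℝ)⁻¹ :=
          Real.rpow_le_rpow (by positivity) hstep (by positivity)
      _ = ((((2:ℝ)^(m+2))^(m+1)) ^ (((m+1:ℕ)):ℝ)⁻¹) * (ε/η) ^ (((m+1:ℕ)):ℝ)⁻¹ :=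
          Real.mul_rpow (by positivity) (by positivity)
      _ = (2:ℝ)^(m+2) * (ε/η) ^ (((m+1:ℕ)):ℝ)⁻¹ := by
          rw [Real.pow_rpow_inv_natCast (by positivity) (by omega)]
  have hBeq : B = (2:ℝ)^(m+2) * (ε/η)^(((m+1:ℕ):ℝ))⁻¹ := by
    rw [hB, one_div]
  have hfinal : ((m:ℝ)+2)*d ≤ B := by rw [hBeq]; exact hroot
  have hcast : ((m+1 : ℕ):ℝ) + 1 = (m:ℝ)+2 := by push_cast; ring
  rw [hcast] at hdB
  linarith
end

section
/- Let G be a finite connected graph (multiple edges allowed) with two distinguished distinct vertices u and v such that u and v have odd degree and every other vertex has even degree. Assume G is one-particle irreducible: deleting any single edge of G leaves a connected graph. Let T be a spanning tree of G and let ℓ₃ be an edge of T lying on the unique path in T joining u to v. Then there exist two distinct edges ℓ₁ and ℓ₂ of G not belonging to T such that each of ℓ₁ and ℓ₂ has its two endpoints in different connected components of T ∖ {ℓ₃}; equivalently, ℓ₃ lies on the fundamental cycle Λ_{ℓ₁} and on the fundamental cycle Λ_{ℓ₂}. -/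
/-- Reachability in a multigraph given by an endpoint map `ends : E → V × V`, using only
edges in the set `S`. -/
def Reach {V E : Type*} (ends : E → V × V) (S : Set E) (a b : V) : Prop :=
  Relation.ReflTransGen (fun x y => ∃ e ∈ S, ends e = (x, y) ∨ ends e = (y, x)) a b

/-- The degree of a vertex `w` in the multigraph `ends : E → V × V` (loops count twice). -/
def mdeg {V E : Type*} [Fintype E] [DecidableEq V] (ends : E → V × V) (w : V) : ℕ :=
  (Finset.univ.filter fun e : E => (ends e).1 = w).card +
    (Finset.univ.filter fun e : E => (ends e).2 = w).card

private lemma reach_step {V E : Type*} (ends : E → V × V) (S : Set E) {e : E}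
    (he : e ∈ S) : Reach ends S (ends e).1 (ends e).2 :=
  Relation.ReflTransGen.single ⟨e, he, Or.inl rfl⟩

private lemma reach_symm {V E : Type*} (ends : E → V × V) (S : Set E) {a b : V}
    (h : Reach ends S a b) : Reach ends S b a :=
  (@Relation.ReflTransGen.stdSymm _ _ ⟨fun _ _ ⟨e, he, h'⟩ => ⟨e, he, h'.symm⟩⟩).symm _ _ h

private lemma reach_iff_of_no_cross {V E : Type*} (ends : E → V × V) (S : Set E)
    (P : V → Prop) (h : ∀ e ∈ S, (P (ends e).1 ↔ P (ends e).2))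
    {a b : V} (hr : Reach ends S a b) : P a ↔ P b := by
  induction hr with
  | refl => exact Iff.rfl
  | tail _ h2 ih =>
    obtain ⟨e, he, h' | h'⟩ := h2
    · have hhe := h e he; rw [h'] at hhe; exact ih.trans hhe
    · have hhe := h e he; rw [h'] at hhe; exact ih.trans hhe.symm

private lemma zmod2_of_odd {n : ℕ} (h : Odd n) : (n : ZMod 2) = 1 := by
  obtain ⟨k, hk⟩ := h
  subst hk; push_cast
  have h2 : (2 : ZMod 2) = 0 := rfl
  rw [h2]; ring

private lemma zmod2_of_even {n : ℕ} (h : Even n) : (n : ZMod 2) = 0 := by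
  obtain ⟨k, hk⟩ := h
  subst hk; push_cast
  have h2 : (2 : ZMod 2) = 0 := rfl
  ring_nf
  simp [h2]

/-- **Overlapping loops.** Let `G` be a finite connected multigraph with two distinguished
distinct vertices `u`, `v` of odd degree, all other vertices having even degree, and assume
`G` is one-particle irreducible (removing any single edge leaves it connected). Let `T` be a
spanning tree (a connected spanning edge set with `#V - 1` edges) and let `ℓ₃ ∈ T` lie on
the path in `T` joining `u` to `v` (equivalently, `u` and `v` lie in different components
of `T \ {ℓ₃}`). Then there are two distinct edges `ℓ₁, ℓ₂ ∉ T` each of whose endpoints lie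
in different components of `T \ {ℓ₃}`; equivalently, `ℓ₃` lies on both fundamental cycles
`Λ_{ℓ₁}` and `Λ_{ℓ₂}`. -/
theorem stmt_6 {V E : Type*} [Fintype V] [Fintype E] [DecidableEq V] [DecidableEq E]
    (ends : E → V × V)
    (hconn : ∀ a b : V, Reach ends Set.univ a b)
    (u v : V) (huv : u ≠ v)
    (hu : Odd (mdeg ends u)) (hv : Odd (mdeg ends v))
    (heven : ∀ w : V, w ≠ u → w ≠ v → Even (mdeg ends w))
    (h1PI : ∀ e₀ : E, ∀ a b : V, Reach ends {e : E | e ≠ e₀} a b)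
    (T : Finset E)
    (hTconn : ∀ a b : V, Reach ends ↑T a b)
    (hTcard : T.card = Fintype.card V - 1)
    (ℓ₃ : E) (hℓ₃ : ℓ₃ ∈ T)
    (hpath : ¬ Reach ends (↑T \ {ℓ₃}) u v) :
    ∃ ℓ₁ ℓ₂ : E, ℓ₁ ≠ ℓ₂ ∧ ℓ₁ ∉ T ∧ ℓ₂ ∉ T ∧
      ¬ Reach ends (↑T \ {ℓ₃}) (ends ℓ₁).1 (ends ℓ₁).2 ∧
      ¬ Reach ends (↑T \ {ℓ₃}) (ends ℓ₂).1 (ends ℓ₂).2 := by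
  classical
  set S : Set E := ↑T \ {ℓ₃} with hSdef
  set P : V → Prop := fun w => Reach ends S u w with hPdef
  have hPu : P u := Relation.ReflTransGen.refl
  have hPv : ¬ P v := hpath
  have hPuv : ¬ (P u ↔ P v) := fun h => hPv (h.mp hPu)
  set χ : V → ZMod 2 := fun w => if P w then 1 else 0 with hχdef
  set C : Finset E := Finset.univ.filter fun e => ¬ (P (ends e).1 ↔ P (ends e).2) with hCdef
  -- fiberwise counting
  have key : ∀ (f : E → V), ∑ e : E, χ (f e) =
      ∑ w : V, ((Finset.univ.filter fun e : E => f e = w).card : ZMod 2) * χ w := by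
    intro f
    rw [← Finset.sum_fiberwise_of_maps_to (g := f) (t := Finset.univ)
        (fun e _ => Finset.mem_univ (f e)) (fun e => χ (f e))]
    refine Finset.sum_congr rfl fun w _ => ?_
    rw [Finset.sum_congr rfl (fun e he => by rw [(Finset.mem_filter.mp he).2]),
        Finset.sum_const, nsmul_eq_mul]
  have h1 : ∑ e : E, (χ (ends e).1 + χ (ends e).2)
      = ∑ w : V, (mdeg ends w : ZMod 2) * χ w := by
    rw [Finset.sum_add_distrib, key (fun e => (ends e).1), key (fun e => (ends e).2),
        ← Finset.sum_add_distrib]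
    refine Finset.sum_congr rfl fun w _ => ?_
    rw [← add_mul]
    congr 1
    rw [mdeg, Nat.cast_add]
  have h2 : ∑ w : V, (mdeg ends w : ZMod 2) * χ w = 1 := by
    rw [Finset.sum_eq_single u]
    · rw [zmod2_of_odd hu]
      simp [hχdef, hPu]
    · intro w _ hw
      by_cases hwv : w = v
      · have hz : χ w = 0 := by rw [hwv]; simp [hχdef, hPv]
        rw [hz, mul_zero]
      · rw [zmod2_of_even (heven w hw hwv), zero_mul]
    · simp
  have h3 : ∑ e : E, (χ (ends e).1 + χ (ends e).2) = (C.card : ZMod 2) := by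
    rw [hCdef, ← Finset.sum_boole]
    refine Finset.sum_congr rfl fun e _ => ?_
    by_cases ha : P (ends e).1 <;> by_cases hb : P (ends e).2 <;>
      simp [hχdef, ha, hb] <;> rfl
  have hcard1 : (C.card : ZMod 2) = 1 := by rw [← h3, h1, h2]
  have hodd : Odd C.card := by
    rw [Nat.odd_iff]
    rcases Nat.mod_two_eq_zero_or_one C.card with h | h
    · exfalso
      have : ((C.card % 2 : ℕ) : ZMod 2) = 1 := by rw [ZMod.natCast_mod]; exact hcard1
      rw [h] at this
      simp at this
    · exact h
  -- for every edge e₀ there is a crossing edge distinct from e₀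
  have hmem : ∀ e₀ : E, ∃ f ∈ C, f ≠ e₀ := by
    intro e₀
    by_contra hc
    push_neg at hc
    apply hPuv
    refine reach_iff_of_no_cross ends {e | e ≠ e₀} P ?_ (h1PI e₀ u v)
    intro e he
    by_contra hne
    exact he (hc e (Finset.mem_filter.mpr ⟨Finset.mem_univ _, hne⟩))
  -- crossing edges other than ℓ₃ are not in T and their endpoints are disconnected
  have hCprop : ∀ f ∈ C, f ≠ ℓ₃ → f ∉ T ∧ ¬ Reach ends S (ends f).1 (ends f).2 := by
    intro f hf hfℓ
    have hcross : ¬ (P (ends f).1 ↔ P (ends f).2) := (Finset.mem_filter.mp hf).2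
    have hnr : ¬ Reach ends S (ends f).1 (ends f).2 := fun hr =>
      hcross ⟨fun h => Relation.ReflTransGen.trans h hr,
        fun h => Relation.ReflTransGen.trans h (reach_symm ends S hr)⟩
    refine ⟨fun hfT => hnr (reach_step ends S ?_), hnr⟩
    exact ⟨hfT, by simpa using hfℓ⟩
  obtain ⟨f₁, hf₁C, hf₁ℓ⟩ := hmem ℓ₃
  obtain ⟨f₂, hf₂C, hf₂f₁⟩ := hmem f₁
  by_cases hf₂ℓ : f₂ = ℓ₃
  · -- f₂ = ℓ₃ : find a third crossing edge
    subst hf₂ℓ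
    have hsub : ({f₁, f₂} : Finset E) ⊆ C := by
      intro x hx
      rcases Finset.mem_insert.mp hx with rfl | hx
      · exact hf₁C
      · rw [Finset.mem_singleton.mp hx]; exact hf₂C
    have hcard2 : ({f₁, f₂} : Finset E).card = 2 := Finset.card_pair hf₁ℓ
    have hne : ({f₁, f₂} : Finset E) ≠ C := by
      intro h
      rw [← h, hcard2] at hodd
      rw [Nat.odd_iff] at hodd
      omega
    obtain ⟨f₃, hf₃C, hf₃⟩ := Finset.exists_of_ssubset (hsub.ssubset_of_ne hne)
    have hf₃f₁ : f₃ ≠ f₁ := fun h => hf₃ (by rw [h]; exact Finset.mem_insert_self _ _)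
    have hf₃ℓ : f₃ ≠ f₂ := fun h => hf₃ (by rw [h]; simp)
    obtain ⟨h1T, h1R⟩ := hCprop f₁ hf₁C hf₁ℓ
    obtain ⟨h3T, h3R⟩ := hCprop f₃ hf₃C hf₃ℓ
    exact ⟨f₁, f₃, fun h => hf₃f₁ h.symm, h1T, h3T, h1R, h3R⟩
  · obtain ⟨h1T, h1R⟩ := hCprop f₁ hf₁C hf₁ℓ
    obtain ⟨h2T, h2R⟩ := hCprop f₂ hf₂C hf₂ℓ
    exact ⟨f₁, f₂, fun h => hf₂f₁ h.symm, h1T, h2T, h1R, h2R⟩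
end

section
/- Let G be a finite connected graph with spanning tree T, and let j : E(G) → ℤ be an assignment of scales to the edges of G with the following property: for every m ∈ ℤ, any two vertices lying in the same connected component of the subgraph G_{≥m} formed by the edges of scale at least m are joined by a path in T all of whose edges have scale at least m (i.e. T intersects each connected component of G_{≥m} in a spanning tree of that component). Let ℓ₃ be an edge of T and let ℓ be an edge of G not in T whose two endpoints lie in different connected components of T ∖ {ℓ₃}. Then j(ℓ) ≤ j(ℓ₃). -/
/-- **Scales on fundamental cycles.** Let `G` be a finite connected multigraph with a
spanning tree `T` (a connected spanning edge set with `#V - 1` edges), and let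
`j : E → ℤ` be a scale assignment such that for every `m`, any two vertices joined by a
path of edges of scale `≥ m` are joined by a path in `T` all of whose edges have scale
`≥ m`. If `ℓ₃ ∈ T` and `ℓ ∉ T` has its two endpoints in different connected components of
`T \ {ℓ₃}`, then `j ℓ ≤ j ℓ₃`. -/
theorem stmt_7 {V E : Type*} [Fintype V] [Fintype E]
    (ends : E → V × V)
    (hconn : ∀ a b : V, Reach ends Set.univ a b)
    (T : Finset E)
    (hTconn : ∀ a b : V, Reach ends ↑T a b)
    (hTcard : T.card = Fintype.card V - 1)
    (j : E → ℤ)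
    (hscales : ∀ m : ℤ, ∀ a b : V, Reach ends {e : E | m ≤ j e} a b →
      Reach ends (↑T ∩ {e : E | m ≤ j e}) a b)
    (ℓ₃ : E) (hℓ₃ : ℓ₃ ∈ T)
    (ℓ : E) (hℓ : ℓ ∉ T)
    (hsep : ¬ Reach ends (↑T \ {ℓ₃}) (ends ℓ).1 (ends ℓ).2) :
    j ℓ ≤ j ℓ₃ := by
  by_contra h
  push_neg at h
  have hr : Reach ends {e : E | j ℓ ≤ j e} (ends ℓ).1 (ends ℓ).2 :=
    Relation.ReflTransGen.single ⟨ℓ, Set.mem_setOf.mpr (le_refl _), Or.inl rfl⟩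
  have h2 := hscales (j ℓ) _ _ hr
  refine hsep (Relation.ReflTransGen.mono ?_ _ _ h2)
  rintro x y ⟨e, ⟨heT, hej⟩, hends⟩
  refine ⟨e, ⟨heT, fun heq => ?_⟩, hends⟩
  simp only [Set.mem_singleton_iff] at heq
  subst heq
  exact absurd hej (by simpa using h.not_ge)
end

section
/- There exists a constant A > 0 such that for all q₀ ∈ (0, 1/2), |I(q₀) − 2 log 2 · (log q₀)² − C₁ · |log q₀|| ≤ A, where C₁ = 2 (log 2)² − 4 ∫₀¹ (1/x) log((1 + 2x)/(1 + x)) dx. -/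
/-- `Φ_{q₀}(ε) = (ε² - q₀²)/(ε² + q₀²)² = Re (1/(i q₀ + ε)²)`. -/
noncomputable def Phi (q₀ ε : ℝ) : ℝ := (ε ^ 2 - q₀ ^ 2) / (ε ^ 2 + q₀ ^ 2) ^ 2

/-- `I(q₀) = 4 ∫₀¹ dy ∫₀¹ dy' ∫₀¹ dx' ∫₀^{x'} dx Φ_{q₀}((2x' - x) y' + y x')`. -/
noncomputable def Ifun (q₀ : ℝ) : ℝ :=
  4 * ∫ y in (0 : ℝ)..1, ∫ y' in (0 : ℝ)..1, ∫ x' in (0 : ℝ)..1, ∫ x in (0 : ℝ)..x',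
    Phi q₀ ((2 * x' - x) * y' + y * x')

open MeasureTheory intervalIntegral Real Set

namespace Stmt8

/-- `g` function -/
noncomputable def gg (q₀ u : ℝ) : ℝ := Real.log (1 + u ^ 2 / q₀ ^ 2) / u

noncomputable def wf (q₀ u : ℝ) : ℝ := Real.log (q₀ ^ 2 + u ^ 2) / u

variable {q₀ : ℝ}

lemma sq_pos (hq : 0 < q₀) (ε : ℝ) : 0 < ε ^ 2 + q₀ ^ 2 := by positivity

lemma hasDeriv_F (hq : 0 < q₀) (ε : ℝ) :
    HasDerivAt (fun t : ℝ => -(t / (t ^ 2 + q₀ ^ 2))) (Phi q₀ ε) ε := by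
  have h1 : HasDerivAt (fun t : ℝ => t / (t ^ 2 + q₀ ^ 2))
      ((1 * (ε ^ 2 + q₀ ^ 2) - ε * (2 * ε)) / (ε ^ 2 + q₀ ^ 2) ^ 2) ε := by
    have hden : HasDerivAt (fun t : ℝ => t ^ 2 + q₀ ^ 2) (2 * ε) ε := by
      simpa using (hasDerivAt_pow 2 ε).add_const (q₀ ^ 2)
    exact (hasDerivAt_id ε).div hden (sq_pos hq ε).ne'
  have := h1.neg
  refine this.congr_deriv ?_
  have := (sq_pos hq ε).ne'
  unfold Phi
  field_simp
  ring

lemma integral_Phi (hq : 0 < q₀) (a b : ℝ) :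
    ∫ ε in a..b, Phi q₀ ε = a / (a ^ 2 + q₀ ^ 2) - b / (b ^ 2 + q₀ ^ 2) := by
  rw [integral_eq_sub_of_hasDerivAt (a := a) (b := b)
    (f := fun t : ℝ => -(t / (t ^ 2 + q₀ ^ 2))) (fun ε _ => hasDeriv_F hq ε) ?_]
  · ring
  · apply Continuous.intervalIntegrable
    apply Continuous.div
    · fun_prop
    · fun_prop
    · intro x; exact (by positivity : (0:ℝ) < (x ^ 2 + q₀ ^ 2) ^ 2).ne'

lemma inner_x (hq : 0 < q₀) {v : ℝ} (hv : v ≠ 0) (y x' : ℝ) :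
    ∫ x in (0:ℝ)..x', Phi q₀ ((2 * x' - x) * v + y * x')
      = (1 / v) * (x' * (y + v) / ((x' * (y + v)) ^ 2 + q₀ ^ 2)
          - x' * (y + 2 * v) / ((x' * (y + 2 * v)) ^ 2 + q₀ ^ 2)) := by
  have hcong : ∀ x : ℝ, Phi q₀ ((2 * x' - x) * v + y * x')
      = Phi q₀ ((-v) * x + (2 * x' * v + y * x')) := by
    intro x; ring_nf
  rw [intervalIntegral.integral_congr (g := fun x => Phi q₀ ((-v) * x + (2 * x' * v + y * x')))
    (fun x _ => hcong x)]
  rw [intervalIntegral.integral_comp_mul_add (fun ε => Phi q₀ ε) (neg_ne_zero.mpr hv)]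
  rw [integral_Phi hq]
  have e1 : -v * 0 + (2 * x' * v + y * x') = x' * (y + 2 * v) := by ring
  have e2 : -v * x' + (2 * x' * v + y * x') = x' * (y + v) := by ring
  rw [e1, e2, smul_eq_mul]
  field_simp
  ring

lemma integral_xc (hq : 0 < q₀) {c : ℝ} (hc : 0 < c) :
    ∫ x in (0:ℝ)..1, x * c / ((x * c) ^ 2 + q₀ ^ 2) = gg q₀ c / 2 := by
  have hder : ∀ x ∈ uIcc (0:ℝ) 1,
      HasDerivAt (fun x : ℝ => Real.log ((x * c) ^ 2 + q₀ ^ 2) / (2 * c))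
        (x * c / ((x * c) ^ 2 + q₀ ^ 2)) x := by
    intro x _
    have hin : HasDerivAt (fun x : ℝ => (x * c) ^ 2 + q₀ ^ 2) (2 * (x * c) * c) x := by
      have : HasDerivAt (fun x : ℝ => x * c) c x := hasDerivAt_mul_const c
      simpa using ((this.pow 2).add_const (q₀ ^ 2))
    have hlog := (hin.log (sq_pos hq (x * c)).ne')
    have := hlog.div_const (2 * c)
    refine this.congr_deriv ?_
    have h2 := (sq_pos hq (x * c)).ne'
    field_simp
  rw [integral_eq_sub_of_hasDerivAt hder]
  · have h2 := (sq_pos hq c).ne'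
    have hq2 : (0:ℝ) < q₀ ^ 2 := by positivity
    unfold gg
    rw [show ((1:ℝ) * c) ^ 2 + q₀ ^ 2 = c ^ 2 + q₀ ^ 2 by ring,
        show ((0:ℝ) * c) ^ 2 + q₀ ^ 2 = q₀ ^ 2 by ring]
    rw [show (1:ℝ) + c ^ 2 / q₀ ^ 2 = (c ^ 2 + q₀ ^ 2) / q₀ ^ 2 by field_simp; ring]
    rw [Real.log_div (by positivity) hq2.ne', Real.log_pow]
    rw [div_sub_div_same, div_div, mul_comm c 2]
  · apply Continuous.intervalIntegrable
    apply Continuous.div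
    · fun_prop
    · fun_prop
    · intro x; exact (sq_pos hq (x * c)).ne'


noncomputable def Ifun' (q₀ : ℝ) : ℝ :=
  4 * ∫ y in (0 : ℝ)..1, ∫ y' in (0 : ℝ)..1, ∫ x' in (0 : ℝ)..1, ∫ x in (0 : ℝ)..x',
    Phi q₀ ((2 * x' - x) * y' + y * x')

lemma cont_xc (hq : 0 < q₀) (c : ℝ) :
    Continuous (fun x : ℝ => x * c / ((x * c) ^ 2 + q₀ ^ 2)) := by
  apply Continuous.div
  · fun_prop
  · fun_prop
  · intro x; exact (sq_pos hq (x * c)).ne'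

lemma inner_xx (hq : 0 < q₀) {v y : ℝ} (hv : 0 < v) (hy : 0 < y) :
    (∫ x' in (0:ℝ)..1, ∫ x in (0:ℝ)..x', Phi q₀ ((2 * x' - x) * v + y * x'))
      = (gg q₀ (y + v) - gg q₀ (y + 2 * v)) / (2 * v) := by
  have hrw : (fun x' => ∫ x in (0:ℝ)..x', Phi q₀ ((2 * x' - x) * v + y * x'))
      = fun x' => (1 / v) * (x' * (y + v) / ((x' * (y + v)) ^ 2 + q₀ ^ 2)
          - x' * (y + 2 * v) / ((x' * (y + 2 * v)) ^ 2 + q₀ ^ 2)) := by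
    funext x'; exact inner_x hq hv.ne' y x'
  rw [intervalIntegral.integral_congr (fun x' _ => congrFun hrw x')]
  rw [intervalIntegral.integral_const_mul]
  rw [intervalIntegral.integral_sub ((cont_xc hq (y + v)).intervalIntegrable 0 1)
    ((cont_xc hq (y + 2 * v)).intervalIntegrable 0 1)]
  rw [integral_xc hq (by linarith), integral_xc hq (by linarith)]
  ring

lemma Ifun_eq_double (hq : 0 < q₀) :
    Ifun' q₀ = 2 * ∫ y in (0:ℝ)..1, ∫ v in (0:ℝ)..1,
      (gg q₀ (y + v) - gg q₀ (y + 2 * v)) / v := by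
  unfold Ifun'
  have hy : ∀ᵐ y ∂(volume : Measure ℝ), y ∈ Set.uIoc (0:ℝ) 1 →
      (∫ y' in (0:ℝ)..1, ∫ x' in (0:ℝ)..1, ∫ x in (0:ℝ)..x',
        Phi q₀ ((2 * x' - x) * y' + y * x'))
      = (1/2) * ∫ v in (0:ℝ)..1, (gg q₀ (y + v) - gg q₀ (y + 2 * v)) / v := by
    refine Filter.Eventually.of_forall (fun y hy => ?_)
    rw [Set.uIoc_of_le (by norm_num : (0:ℝ) ≤ 1)] at hy
    have hy0 : 0 < y := hy.1
    have hv : ∀ᵐ v ∂(volume : Measure ℝ), v ∈ Set.uIoc (0:ℝ) 1 →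
        (∫ x' in (0:ℝ)..1, ∫ x in (0:ℝ)..x', Phi q₀ ((2 * x' - x) * v + y * x'))
        = (1/2) * ((gg q₀ (y + v) - gg q₀ (y + 2 * v)) / v) := by
      refine Filter.Eventually.of_forall (fun v hv => ?_)
      rw [Set.uIoc_of_le (by norm_num : (0:ℝ) ≤ 1)] at hv
      rw [inner_xx hq hv.1 hy0]
      ring
    rw [intervalIntegral.integral_congr_ae hv, intervalIntegral.integral_const_mul]
  rw [intervalIntegral.integral_congr_ae hy, intervalIntegral.integral_const_mul]
  ring


lemma log_one_add_le {x : ℝ} (hx : 0 ≤ x) : Real.log (1 + x) ≤ x := by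
  have := Real.log_le_sub_one_of_pos (x := 1 + x) (by linarith)
  linarith

lemma gg_nonneg (hq : 0 < q₀) {u : ℝ} (hu : 0 ≤ u) : 0 ≤ gg q₀ u := by
  unfold gg
  apply div_nonneg _ hu
  apply Real.log_nonneg
  have : 0 ≤ u ^ 2 / q₀ ^ 2 := by positivity
  linarith

lemma gg_le (hq : 0 < q₀) {u : ℝ} (hu : 0 ≤ u) : gg q₀ u ≤ u / q₀ ^ 2 := by
  rcases eq_or_lt_of_le hu with h | h
  · simp [gg, ← h]
  · unfold gg
    rw [div_le_div_iff₀ h (by positivity : (0:ℝ) < q₀ ^ 2)]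
    have h1 : Real.log (1 + u ^ 2 / q₀ ^ 2) ≤ u ^ 2 / q₀ ^ 2 :=
      log_one_add_le (by positivity)
    calc Real.log (1 + u ^ 2 / q₀ ^ 2) * q₀ ^ 2 ≤ u ^ 2 / q₀ ^ 2 * q₀ ^ 2 := by
          apply mul_le_mul_of_nonneg_right h1 (by positivity)
      _ = u * u := by field_simp
      _ = u * u * 1 := by ring
      _ ≤ u * u := by nlinarith

lemma gg_decomp (hq : 0 < q₀) {u : ℝ} (hu : 0 < u) :
    gg q₀ u = (2 * (-Real.log q₀)) * (1 / u) + wf q₀ u := by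
  unfold gg wf
  rw [show (1:ℝ) + u ^ 2 / q₀ ^ 2 = (q₀ ^ 2 + u ^ 2) / q₀ ^ 2 by
    rw [add_div, div_self (by positivity : (q₀:ℝ) ^ 2 ≠ 0)]]
  rw [Real.log_div (by positivity) (by positivity), Real.log_pow]
  field_simp
  ring

lemma gg_decomp2 (hq : 0 < q₀) {u : ℝ} (hu : 0 < u) :
    gg q₀ u = 2 * (Real.log u - Real.log q₀) * (1 / u) + Real.log (1 + q₀ ^ 2 / u ^ 2) / u := by
  unfold gg
  rw [show (1:ℝ) + u ^ 2 / q₀ ^ 2 = (q₀ ^ 2 + u ^ 2) / q₀ ^ 2 by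
    rw [add_div, div_self (by positivity : (q₀:ℝ) ^ 2 ≠ 0)]]
  rw [show (1:ℝ) + q₀ ^ 2 / u ^ 2 = (q₀ ^ 2 + u ^ 2) / u ^ 2 by
    rw [add_div, div_self (by positivity : (u:ℝ) ^ 2 ≠ 0), add_comm]]
  rw [Real.log_div (by positivity) (by positivity : (q₀:ℝ) ^ 2 ≠ 0),
      Real.log_div (by positivity) (by positivity : (u:ℝ) ^ 2 ≠ 0),
      Real.log_pow, Real.log_pow]
  field_simp
  ring

lemma cont_log_aux (hq : 0 < q₀) : Continuous (fun u : ℝ => Real.log (1 + u ^ 2 / q₀ ^ 2)) := by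
  apply Continuous.log
  · fun_prop
  · intro x
    have : 0 ≤ x ^ 2 / q₀ ^ 2 := by positivity
    intro h; linarith [h]

lemma gg_contOn (hq : 0 < q₀) : ContinuousOn (gg q₀) {u : ℝ | u ≠ 0} := by
  unfold gg
  exact ((cont_log_aux hq).continuousOn).div continuousOn_id (fun x hx => hx)

lemma gg_intable (hq : 0 < q₀) {a b : ℝ} (ha : 0 < a) (hb : 0 < b) :
    IntervalIntegrable (gg q₀) volume a b := by
  apply ContinuousOn.intervalIntegrable
  apply (gg_contOn hq).mono
  intro x hx
  rcases le_total a b with h | h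
  · rw [Set.uIcc_of_le h] at hx; exact (lt_of_lt_of_le ha hx.1).ne'
  · rw [Set.uIcc_of_ge h] at hx; exact (lt_of_lt_of_le hb hx.1).ne'

lemma wf_contOn (hq : 0 < q₀) : ContinuousOn (wf q₀) {u : ℝ | u ≠ 0} := by
  unfold wf
  apply ContinuousOn.div _ continuousOn_id (fun x hx => hx)
  apply Continuous.continuousOn
  apply Continuous.log
  · fun_prop
  · intro x; positivity

lemma wf_intable (hq : 0 < q₀) {a b : ℝ} (ha : 0 < a) (hb : 0 < b) :
    IntervalIntegrable (wf q₀) volume a b := by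
  apply ContinuousOn.intervalIntegrable
  apply (wf_contOn hq).mono
  intro x hx
  rcases le_total a b with h | h
  · rw [Set.uIcc_of_le h] at hx; exact (lt_of_lt_of_le ha hx.1).ne'
  · rw [Set.uIcc_of_ge h] at hx; exact (lt_of_lt_of_le hb hx.1).ne'

/-- derivative of gg -/
noncomputable def Dg (q₀ u : ℝ) : ℝ :=
  (2 * u / q₀ ^ 2 / (1 + u ^ 2 / q₀ ^ 2)) * u⁻¹ + Real.log (1 + u ^ 2 / q₀ ^ 2) * (-(u ^ 2)⁻¹)

lemma hasDerivAt_gg (hq : 0 < q₀) {u : ℝ} (hu : u ≠ 0) :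
    HasDerivAt (gg q₀) (Dg q₀ u) u := by
  have h1 : HasDerivAt (fun u : ℝ => 1 + u ^ 2 / q₀ ^ 2) (2 * u / q₀ ^ 2) u := by
    have := ((hasDerivAt_pow 2 u).div_const (q₀ ^ 2)).const_add (1:ℝ)
    simpa using this
  have hpos : (0:ℝ) < 1 + u ^ 2 / q₀ ^ 2 := by positivity
  have h2 : HasDerivAt (fun u : ℝ => Real.log (1 + u ^ 2 / q₀ ^ 2))
      (2 * u / q₀ ^ 2 / (1 + u ^ 2 / q₀ ^ 2)) u := h1.log hpos.ne'
  have h3 := h2.mul (hasDerivAt_inv hu)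
  have : gg q₀ = fun u : ℝ => Real.log (1 + u ^ 2 / q₀ ^ 2) * u⁻¹ := by
    funext x; unfold gg; rw [div_eq_mul_inv]
  rw [this]
  exact h3

lemma Dg_bound (hq : 0 < q₀) {u : ℝ} (hu : 0 < u) : |Dg q₀ u| ≤ 3 / q₀ ^ 2 := by
  unfold Dg
  have hpos : (0:ℝ) < 1 + u ^ 2 / q₀ ^ 2 := by positivity
  have h1 : |(2 * u / q₀ ^ 2 / (1 + u ^ 2 / q₀ ^ 2)) * u⁻¹| ≤ 2 / q₀ ^ 2 := by
    rw [abs_of_nonneg (by positivity)]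
    have : 2 * u / q₀ ^ 2 / (1 + u ^ 2 / q₀ ^ 2) ≤ 2 * u / q₀ ^ 2 := by
      apply div_le_self (by positivity)
        (by linarith [div_nonneg (sq_nonneg u) (sq_nonneg q₀)])
    calc (2 * u / q₀ ^ 2 / (1 + u ^ 2 / q₀ ^ 2)) * u⁻¹ ≤ (2 * u / q₀ ^ 2) * u⁻¹ := by
          apply mul_le_mul_of_nonneg_right this (by positivity)
      _ = 2 / q₀ ^ 2 := by field_simp
  have h2 : |Real.log (1 + u ^ 2 / q₀ ^ 2) * (-(u ^ 2)⁻¹)| ≤ 1 / q₀ ^ 2 := by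
    rw [abs_mul, abs_neg, abs_inv, abs_of_nonneg (Real.log_nonneg (by linarith [div_nonneg (sq_nonneg u) (sq_nonneg q₀)])), abs_of_nonneg (by positivity : (0:ℝ) ≤ u ^ 2)]
    have hl : Real.log (1 + u ^ 2 / q₀ ^ 2) ≤ u ^ 2 / q₀ ^ 2 := log_one_add_le (by positivity)
    calc Real.log (1 + u ^ 2 / q₀ ^ 2) * (u ^ 2)⁻¹ ≤ (u ^ 2 / q₀ ^ 2) * (u ^ 2)⁻¹ := by
          apply mul_le_mul_of_nonneg_right hl (by positivity)
      _ = 1 / q₀ ^ 2 := by field_simp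
  calc |(2 * u / q₀ ^ 2 / (1 + u ^ 2 / q₀ ^ 2)) * u⁻¹ + Real.log (1 + u ^ 2 / q₀ ^ 2) * (-(u ^ 2)⁻¹)|
      ≤ |(2 * u / q₀ ^ 2 / (1 + u ^ 2 / q₀ ^ 2)) * u⁻¹| + |Real.log (1 + u ^ 2 / q₀ ^ 2) * (-(u ^ 2)⁻¹)| := abs_add_le _ _
    _ ≤ 2 / q₀ ^ 2 + 1 / q₀ ^ 2 := add_le_add h1 h2
    _ = 3 / q₀ ^ 2 := by ring

lemma gg_lip (hq : 0 < q₀) {a b : ℝ} (ha : 0 < a) (hab : a ≤ b) :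
    |gg q₀ b - gg q₀ a| ≤ 3 / q₀ ^ 2 * (b - a) := by
  have hconv : Convex ℝ (Set.Icc a b) := convex_Icc a b
  have hd : ∀ x ∈ Set.Icc a b, HasDerivWithinAt (gg q₀) (Dg q₀ x) (Set.Icc a b) x :=
    fun x hx => (hasDerivAt_gg hq (lt_of_lt_of_le ha hx.1).ne').hasDerivWithinAt
  have hb : ∀ x ∈ Set.Icc a b, ‖Dg q₀ x‖ ≤ 3 / q₀ ^ 2 :=
    fun x hx => Dg_bound hq (lt_of_lt_of_le ha hx.1)
  have := hconv.norm_image_sub_le_of_norm_hasDerivWithin_le hd hb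
    (Set.left_mem_Icc.mpr hab) (Set.right_mem_Icc.mpr hab)
  rw [Real.norm_eq_abs] at this
  calc |gg q₀ b - gg q₀ a| ≤ 3 / q₀ ^ 2 * ‖b - a‖ := this
    _ = 3 / q₀ ^ 2 * (b - a) := by rw [Real.norm_eq_abs, abs_of_nonneg (by linarith)]


lemma F_meas (hq : 0 < q₀) : Measurable (fun p : ℝ × ℝ =>
    (gg q₀ (p.1 + p.2) - gg q₀ (p.1 + 2 * p.2)) / p.2) := by
  unfold gg
  apply Measurable.div _ measurable_snd
  apply Measurable.sub
  · exact (Real.measurable_log.comp (by fun_prop)).div (by fun_prop)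
  · exact (Real.measurable_log.comp (by fun_prop)).div (by fun_prop)

lemma fubini1 (hq : 0 < q₀) :
    (∫ y in (0:ℝ)..1, ∫ v in (0:ℝ)..1, (gg q₀ (y + v) - gg q₀ (y + 2 * v)) / v)
      = ∫ v in (0:ℝ)..1, ∫ y in (0:ℝ)..1, (gg q₀ (y + v) - gg q₀ (y + 2 * v)) / v := by
  have hInt : Integrable (Function.uncurry fun y v =>
      (gg q₀ (y + v) - gg q₀ (y + 2 * v)) / v)
      ((volume.restrict (Ioc (0:ℝ) 1)).prod (volume.restrict (Ioc (0:ℝ) 1))) := by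
    apply Integrable.mono' (integrable_const (3 / q₀ ^ 2))
    · exact (F_meas hq).aestronglyMeasurable
    · rw [Measure.prod_restrict]
      rw [ae_restrict_iff' (measurableSet_Ioc.prod measurableSet_Ioc)]
      refine Filter.Eventually.of_forall (fun p hp => ?_)
      obtain ⟨hp1, hp2⟩ := hp
      have hv0 : 0 < p.2 := hp2.1
      have ha : 0 < p.1 + p.2 := by have := hp1.1; linarith
      have hab : p.1 + p.2 ≤ p.1 + 2 * p.2 := by linarith
      have hlip := gg_lip hq ha hab
      rw [Function.uncurry]
      rw [Real.norm_eq_abs, abs_div, abs_of_pos hv0]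
      rw [div_le_iff₀ hv0]
      calc |gg q₀ (p.1 + p.2) - gg q₀ (p.1 + 2 * p.2)|
          = |gg q₀ (p.1 + 2 * p.2) - gg q₀ (p.1 + p.2)| := abs_sub_comm _ _
        _ ≤ 3 / q₀ ^ 2 * (p.1 + 2 * p.2 - (p.1 + p.2)) := hlip
        _ = 3 / q₀ ^ 2 * p.2 := by ring
  simp only [intervalIntegral.integral_of_le (zero_le_one (α := ℝ))]
  exact MeasureTheory.integral_integral_swap hInt

lemma one_div_cont_intable {a b : ℝ} (ha : 0 < a) (hb : 0 < b) :
    IntervalIntegrable (fun u : ℝ => 1 / u) volume a b := by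
  apply ContinuousOn.intervalIntegrable
  apply ContinuousOn.div continuousOn_const continuousOn_id
  intro x hx
  rcases le_total a b with h | h
  · rw [Set.uIcc_of_le h] at hx; exact (lt_of_lt_of_le ha hx.1).ne'
  · rw [Set.uIcc_of_ge h] at hx; exact (lt_of_lt_of_le hb hx.1).ne'

lemma gg_comp_intable (hq : 0 < q₀) {c : ℝ} (hc : 0 < c) :
    IntervalIntegrable (fun y : ℝ => gg q₀ (y + c)) volume 0 1 := by
  apply ContinuousOn.intervalIntegrable
  apply (gg_contOn hq).comp (Continuous.continuousOn (by fun_prop))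
  intro x hx
  rw [Set.uIcc_of_le (zero_le_one (α := ℝ))] at hx
  have := hx.1
  show x + c ≠ 0
  positivity

lemma decomp_integral (hq : 0 < q₀) {a b : ℝ} (ha : 0 < a) (hab : a ≤ b) :
    ∫ u in a..b, gg q₀ u
      = (2 * (-Real.log q₀)) * Real.log (b / a) + ∫ u in a..b, wf q₀ u := by
  have hb : 0 < b := lt_of_lt_of_le ha hab
  have heq : EqOn (gg q₀) (fun u => (2 * (-Real.log q₀)) * (1 / u) + wf q₀ u) (uIcc a b) := by
    intro u hu
    rw [Set.uIcc_of_le hab] at hu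
    have hu0 : 0 < u := lt_of_lt_of_le ha hu.1
    rw [gg_decomp hq hu0]
  rw [intervalIntegral.integral_congr heq]
  rw [intervalIntegral.integral_add
    ((one_div_cont_intable ha hb).const_mul _) (wf_intable hq ha hb)]
  rw [intervalIntegral.integral_const_mul, integral_one_div]
  intro h
  rw [Set.uIcc_of_le hab] at h
  exact absurd h.1 (not_le.mpr ha)

lemma inner_y (hq : 0 < q₀) {v : ℝ} (hv0 : 0 < v) (hv1 : v ≤ 1) :
    (∫ y in (0:ℝ)..1, (gg q₀ (y + v) - gg q₀ (y + 2 * v)) / v)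
      = (∫ s in (1:ℝ)..2, gg q₀ (v * s))
        - (2 * (-Real.log q₀)) * ((1 / v) * Real.log ((1 + 2 * v) / (1 + v)))
        - (1 / v) * ∫ u in (1 + v)..(1 + 2 * v), wf q₀ u := by
  have h2v : 0 < 2 * v := by linarith
  have hcong : EqOn (fun y : ℝ => (gg q₀ (y + v) - gg q₀ (y + 2 * v)) / v)
      (fun y => (1 / v) * (gg q₀ (y + v) - gg q₀ (y + 2 * v))) (uIcc 0 1) := by
    intro y _; simp [div_eq_inv_mul, one_div]
  rw [intervalIntegral.integral_congr hcong, intervalIntegral.integral_const_mul]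
  rw [intervalIntegral.integral_sub (gg_comp_intable hq hv0) (gg_comp_intable hq h2v)]
  rw [intervalIntegral.integral_comp_add_right (fun u => gg q₀ u) v,
      intervalIntegral.integral_comp_add_right (fun u => gg q₀ u) (2 * v)]
  rw [zero_add, zero_add]
  -- adjacent interval splitting
  have i1 : IntervalIntegrable (gg q₀) volume v (2 * v) := gg_intable hq hv0 h2v
  have i2 : IntervalIntegrable (gg q₀) volume (2 * v) (1 + v) := gg_intable hq h2v (by linarith)
  have i3 : IntervalIntegrable (gg q₀) volume (1 + v) (1 + 2 * v) :=
    gg_intable hq (by linarith) (by linarith)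
  have hA : (∫ u in v..(2 * v), gg q₀ u) + ∫ u in (2 * v)..(1 + v), gg q₀ u
      = ∫ u in v..(1 + v), gg q₀ u :=
    intervalIntegral.integral_add_adjacent_intervals i1 i2
  have hB : (∫ u in (2 * v)..(1 + v), gg q₀ u) + ∫ u in (1 + v)..(1 + 2 * v), gg q₀ u
      = ∫ u in (2 * v)..(1 + 2 * v), gg q₀ u :=
    intervalIntegral.integral_add_adjacent_intervals i2 i3
  rw [← hA, ← hB]
  -- scaling for the first piece
  have hscale : (∫ s in (1:ℝ)..2, gg q₀ (v * s)) = (1 / v) * ∫ u in v..(2 * v), gg q₀ u := by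
    rw [intervalIntegral.integral_comp_mul_left (fun u => gg q₀ u) hv0.ne']
    rw [mul_one, smul_eq_mul, one_div]
    ring_nf
  -- decompose the far piece
  have hdec := decomp_integral hq (show (0:ℝ) < 1 + v by linarith)
    (show (1:ℝ) + v ≤ 1 + 2 * v by linarith)
  rw [hscale, hdec]
  have : Real.log ((1 + 2 * v) / (1 + v)) = Real.log ((1 + 2 * v) / (1 + v)) := rfl
  ring


lemma hInt2 (hq : 0 < q₀) : Integrable (Function.uncurry fun v s => gg q₀ (v * s))
    ((volume.restrict (Ioc (0:ℝ) 1)).prod (volume.restrict (Ioc (1:ℝ) 2))) := by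
  apply Integrable.mono' (integrable_const (2 / q₀ ^ 2))
  · apply Measurable.aestronglyMeasurable
    unfold gg
    exact (Real.measurable_log.comp (by fun_prop)).div (by fun_prop)
  · rw [Measure.prod_restrict]
    rw [ae_restrict_iff' (measurableSet_Ioc.prod measurableSet_Ioc)]
    refine Filter.Eventually.of_forall (fun p hp => ?_)
    obtain ⟨hp1, hp2⟩ := hp
    have h1 : 0 < p.1 := hp1.1
    have h2 : (1:ℝ) < p.2 := hp2.1
    have hvs : 0 ≤ p.1 * p.2 := by positivity
    rw [Function.uncurry, Real.norm_eq_abs, abs_of_nonneg (gg_nonneg hq hvs)]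
    calc gg q₀ (p.1 * p.2) ≤ p.1 * p.2 / q₀ ^ 2 := gg_le hq hvs
      _ ≤ 2 / q₀ ^ 2 := by
          apply div_le_div_of_nonneg_right _ (by positivity)
          nlinarith [hp1.2, hp2.2, h1.le]

lemma int_a (hq : 0 < q₀) :
    IntervalIntegrable (fun v : ℝ => ∫ s in (1:ℝ)..2, gg q₀ (v * s)) volume 0 1 := by
  rw [intervalIntegrable_iff, uIoc_of_le (zero_le_one (α := ℝ))]
  have h := (hInt2 hq).integral_prod_left
  have heq : (fun v : ℝ => ∫ s, (Function.uncurry fun v s => gg q₀ (v * s)) (v, s)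
      ∂(volume.restrict (Ioc (1:ℝ) 2))) = fun v : ℝ => ∫ s in (1:ℝ)..2, gg q₀ (v * s) := by
    funext v
    rw [intervalIntegral.integral_of_le (by norm_num : (1:ℝ) ≤ 2)]
    rfl
  rw [← heq]
  exact h

lemma int_b : IntervalIntegrable
    (fun v : ℝ => (1 / v) * Real.log ((1 + 2 * v) / (1 + v))) volume 0 1 := by
  rw [intervalIntegrable_iff, uIoc_of_le (zero_le_one (α := ℝ))]
  apply Integrable.mono' (integrable_const 1)
  · apply Measurable.aestronglyMeasurable
    exact (measurable_const.div measurable_id).mul (Real.measurable_log.comp (by fun_prop))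
  · rw [ae_restrict_iff' measurableSet_Ioc]
    refine Filter.Eventually.of_forall (fun v hv => ?_)
    have hv0 : 0 < v := hv.1
    have hpos : (0:ℝ) < (1 + 2 * v) / (1 + v) := by positivity
    have hge : (1:ℝ) ≤ (1 + 2 * v) / (1 + v) := by
      rw [le_div_iff₀ (by linarith : (0:ℝ) < 1 + v)]; linarith
    have hlog0 : 0 ≤ Real.log ((1 + 2 * v) / (1 + v)) := Real.log_nonneg hge
    have hlogv : Real.log ((1 + 2 * v) / (1 + v)) ≤ v := by
      have h1 := Real.log_le_sub_one_of_pos hpos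
      have h2 : (1 + 2 * v) / (1 + v) - 1 ≤ v := by
        rw [div_sub_one (by linarith : (1:ℝ) + v ≠ 0)]
        rw [div_le_iff₀ (by linarith : (0:ℝ) < 1 + v)]
        nlinarith
      linarith
    rw [Real.norm_eq_abs, abs_le]
    constructor
    · have : 0 ≤ (1 / v) * Real.log ((1 + 2 * v) / (1 + v)) := by positivity
      linarith
    · calc (1 / v) * Real.log ((1 + 2 * v) / (1 + v)) ≤ (1 / v) * v := by
            apply mul_le_mul_of_nonneg_left hlogv (by positivity)
        _ = 1 := by field_simp

lemma wf_le_log10 (hq : 0 < q₀) (hq2 : q₀ < 1/2) {u : ℝ} (hu : 1 ≤ u) (hu3 : u ≤ 3) :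
    wf q₀ u ≤ Real.log 10 := by
  unfold wf
  have h1 : (1:ℝ) ≤ q₀ ^ 2 + u ^ 2 := by nlinarith
  have h2 : q₀ ^ 2 + u ^ 2 ≤ 10 := by nlinarith
  calc Real.log (q₀ ^ 2 + u ^ 2) / u ≤ Real.log (q₀ ^ 2 + u ^ 2) := by
        apply div_le_self (Real.log_nonneg h1) hu
    _ ≤ Real.log 10 := Real.log_le_log (by linarith) h2

lemma wf_nonneg' {u : ℝ} (hu : 1 ≤ u) : 0 ≤ wf q₀ u := by
  unfold wf
  apply div_nonneg _ (by linarith)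
  apply Real.log_nonneg
  nlinarith

lemma W_bound (hq : 0 < q₀) (hq2 : q₀ < 1/2) {v : ℝ} (hv0 : 0 < v) (hv1 : v ≤ 1) :
    0 ≤ (1 / v) * (∫ u in (1 + v)..(1 + 2 * v), wf q₀ u)
    ∧ (1 / v) * (∫ u in (1 + v)..(1 + 2 * v), wf q₀ u) ≤ Real.log 10 := by
  have hii := wf_intable hq (show (0:ℝ) < 1 + v by linarith)
    (show (0:ℝ) < 1 + 2 * v by linarith)
  have hIle : (1:ℝ) + v ≤ 1 + 2 * v := by linarith
  have hint0 : 0 ≤ ∫ u in (1 + v)..(1 + 2 * v), wf q₀ u := by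
    apply intervalIntegral.integral_nonneg hIle
    intro u hu
    exact wf_nonneg' (by linarith [hu.1])
  have hintle : (∫ u in (1 + v)..(1 + 2 * v), wf q₀ u) ≤ v * Real.log 10 := by
    have := intervalIntegral.integral_mono_on hIle hii
      (intervalIntegrable_const (c := Real.log 10))
      (fun u hu => wf_le_log10 hq hq2 (by linarith [hu.1]) (by linarith [hu.2]))
    rw [intervalIntegral.integral_const, smul_eq_mul] at this
    calc (∫ u in (1 + v)..(1 + 2 * v), wf q₀ u) ≤ (1 + 2 * v - (1 + v)) * Real.log 10 := this
      _ = v * Real.log 10 := by ring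
  constructor
  · positivity
  · calc (1 / v) * (∫ u in (1 + v)..(1 + 2 * v), wf q₀ u) ≤ (1 / v) * (v * Real.log 10) :=
        mul_le_mul_of_nonneg_left hintle (by positivity)
      _ = Real.log 10 := by field_simp

lemma int_c (hq : 0 < q₀) (hq2 : q₀ < 1/2) : IntervalIntegrable
    (fun v : ℝ => (1 / v) * ∫ u in (1 + v)..(1 + 2 * v), wf q₀ u) volume 0 1 := by
  rw [intervalIntegrable_iff, uIoc_of_le (zero_le_one (α := ℝ))]
  apply Integrable.mono' (integrable_const (Real.log 10))
  · -- a.e. strong measurability via continuity on Ioc 0 1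
    have hwint : IntervalIntegrable (wf q₀) volume 1 3 := wf_intable hq one_pos (by norm_num)
    have hWp : ContinuousOn (fun t => ∫ u in (1:ℝ)..t, wf q₀ u) (uIcc (1:ℝ) 3) :=
      intervalIntegral.continuousOn_primitive_interval' hwint left_mem_uIcc
    have hcont : ContinuousOn
        (fun v : ℝ => (1 / v) * ((∫ u in (1:ℝ)..(1 + 2 * v), wf q₀ u)
          - ∫ u in (1:ℝ)..(1 + v), wf q₀ u)) (Ioc (0:ℝ) 1) := by
      apply ContinuousOn.mul
      · apply ContinuousOn.div continuousOn_const continuousOn_id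
        intro x hx; exact hx.1.ne'
      · apply ContinuousOn.sub
        · apply hWp.comp (Continuous.continuousOn (by fun_prop))
          intro x hx
          rw [uIcc_of_le (by norm_num : (1:ℝ) ≤ 3)]
          refine ⟨?_, ?_⟩
          · show (1:ℝ) ≤ 1 + 2 * x; linarith [hx.1]
          · show (1:ℝ) + 2 * x ≤ 3; linarith [hx.2]
        · apply hWp.comp (Continuous.continuousOn (by fun_prop))
          intro x hx
          rw [uIcc_of_le (by norm_num : (1:ℝ) ≤ 3)]
          refine ⟨?_, ?_⟩
          · show (1:ℝ) ≤ 1 + x; linarith [hx.1]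
          · show (1:ℝ) + x ≤ 3; linarith [hx.2]
    have heq : EqOn (fun v : ℝ => (1 / v) * ∫ u in (1 + v)..(1 + 2 * v), wf q₀ u)
        (fun v : ℝ => (1 / v) * ((∫ u in (1:ℝ)..(1 + 2 * v), wf q₀ u)
          - ∫ u in (1:ℝ)..(1 + v), wf q₀ u)) (Ioc (0:ℝ) 1) := by
      intro v hv
      have h1 : IntervalIntegrable (wf q₀) volume 1 (1 + 2 * v) :=
        wf_intable hq one_pos (by linarith [hv.1])
      have h2 : IntervalIntegrable (wf q₀) volume 1 (1 + v) :=
        wf_intable hq one_pos (by linarith [hv.1])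
      simp only
      rw [intervalIntegral.integral_interval_sub_left h1 h2]
    exact (hcont.congr heq).aestronglyMeasurable measurableSet_Ioc
  · rw [ae_restrict_iff' measurableSet_Ioc]
    refine Filter.Eventually.of_forall (fun v hv => ?_)
    obtain ⟨h0, h1⟩ := W_bound hq hq2 hv.1 hv.2
    rw [Real.norm_eq_abs, abs_le]
    constructor
    · have : (0:ℝ) < 10 := by norm_num
      have := Real.log_nonneg (by norm_num : (1:ℝ) ≤ 10)
      linarith
    · exact h1

lemma v_split (hq : 0 < q₀) (hq2 : q₀ < 1/2) :
    (∫ v in (0:ℝ)..1, ∫ y in (0:ℝ)..1, (gg q₀ (y + v) - gg q₀ (y + 2 * v)) / v)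
      = (∫ v in (0:ℝ)..1, ∫ s in (1:ℝ)..2, gg q₀ (v * s))
        - (2 * (-Real.log q₀)) * (∫ v in (0:ℝ)..1, (1 / v) * Real.log ((1 + 2 * v) / (1 + v)))
        - ∫ v in (0:ℝ)..1, (1 / v) * ∫ u in (1 + v)..(1 + 2 * v), wf q₀ u := by
  have hcong : ∀ᵐ v ∂(volume : Measure ℝ), v ∈ Set.uIoc (0:ℝ) 1 →
      (∫ y in (0:ℝ)..1, (gg q₀ (y + v) - gg q₀ (y + 2 * v)) / v)
      = (∫ s in (1:ℝ)..2, gg q₀ (v * s))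
        - (2 * (-Real.log q₀)) * ((1 / v) * Real.log ((1 + 2 * v) / (1 + v)))
        - (1 / v) * ∫ u in (1 + v)..(1 + 2 * v), wf q₀ u := by
    refine Filter.Eventually.of_forall (fun v hv => ?_)
    rw [uIoc_of_le (zero_le_one (α := ℝ))] at hv
    exact inner_y hq hv.1 hv.2
  rw [intervalIntegral.integral_congr_ae hcong]
  rw [intervalIntegral.integral_sub ((int_a hq).sub ((int_b).const_mul _)) (int_c hq hq2)]
  rw [intervalIntegral.integral_sub (int_a hq) ((int_b).const_mul _)]
  rw [intervalIntegral.integral_const_mul]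


lemma gg_meas : Measurable (gg q₀) := by
  unfold gg
  exact (Real.measurable_log.comp (by fun_prop)).div measurable_id

lemma gg_intable0 (hq : 0 < q₀) {b : ℝ} (hb : 0 ≤ b) :
    IntervalIntegrable (gg q₀) volume 0 b := by
  apply IntervalIntegrable.mono_fun (f := fun u : ℝ => u / q₀ ^ 2)
  · exact (by fun_prop : Continuous fun u : ℝ => u / q₀ ^ 2).intervalIntegrable 0 b
  · exact gg_meas.aestronglyMeasurable
  · filter_upwards [ae_restrict_mem measurableSet_Ioc] with u hu
    have hu0 : 0 < u := by
      have := hu.1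
      rwa [inf_eq_left.mpr hb] at this
    rw [Real.norm_eq_abs, Real.norm_eq_abs, abs_of_nonneg (gg_nonneg hq hu0.le),
      abs_of_nonneg (by positivity : (0:ℝ) ≤ u / q₀ ^ 2)]
    exact gg_le hq hu0.le

lemma A1_eval (hq : 0 < q₀) :
    (∫ v in (0:ℝ)..1, ∫ s in (1:ℝ)..2, gg q₀ (v * s))
      = ∫ s in (1:ℝ)..2, (1 / s) * ∫ u in (0:ℝ)..s, gg q₀ u := by
  have h12 : (1:ℝ) ≤ 2 := one_le_two
  have h01 : (0:ℝ) ≤ 1 := zero_le_one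
  rw [intervalIntegral.integral_of_le h01]
  have hin : ∀ v : ℝ, (∫ s in (1:ℝ)..2, gg q₀ (v * s))
      = ∫ s in Ioc (1:ℝ) 2, gg q₀ (v * s) := fun v =>
    intervalIntegral.integral_of_le h12
  simp_rw [hin]
  rw [MeasureTheory.integral_integral_swap (hInt2 hq)]
  rw [← intervalIntegral.integral_of_le h12]
  apply intervalIntegral.integral_congr_ae
  refine Filter.Eventually.of_forall (fun s hs => ?_)
  rw [uIoc_of_le h12] at hs
  have hs0 : (0:ℝ) < s := by linarith [hs.1]
  rw [← intervalIntegral.integral_of_le h01]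
  rw [intervalIntegral.integral_comp_mul_right (fun u => gg q₀ u) hs0.ne']
  rw [zero_mul, one_mul, smul_eq_mul, one_div]

lemma H_eval (hq : 0 < q₀) {s : ℝ} (hs1 : 1 ≤ s) :
    (∫ u in (0:ℝ)..s, gg q₀ u)
      = (∫ u in (0:ℝ)..1, gg q₀ u) + 2 * (-Real.log q₀) * Real.log s
        + ∫ u in (1:ℝ)..s, wf q₀ u := by
  have h1 : IntervalIntegrable (gg q₀) volume 0 1 := gg_intable0 hq zero_le_one
  have h2 : IntervalIntegrable (gg q₀) volume 1 s := gg_intable hq one_pos (by linarith)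
  rw [← intervalIntegral.integral_add_adjacent_intervals h1 h2]
  rw [decomp_integral hq one_pos hs1, div_one]
  ring

lemma rho_bounds (hq : 0 < q₀) (hq2 : q₀ < 1/2) {s : ℝ} (hs1 : 1 ≤ s) (hs2 : s ≤ 2) :
    0 ≤ (1 / s) * (∫ u in (1:ℝ)..s, wf q₀ u)
    ∧ (1 / s) * (∫ u in (1:ℝ)..s, wf q₀ u) ≤ Real.log 10 := by
  have hii := wf_intable hq one_pos (show (0:ℝ) < s by linarith)
  have hint0 : 0 ≤ ∫ u in (1:ℝ)..s, wf q₀ u :=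
    intervalIntegral.integral_nonneg hs1 (fun u hu => wf_nonneg' hu.1)
  have hintle : (∫ u in (1:ℝ)..s, wf q₀ u) ≤ (s - 1) * Real.log 10 := by
    have := intervalIntegral.integral_mono_on hs1 hii
      (intervalIntegrable_const (c := Real.log 10))
      (fun u hu => wf_le_log10 hq hq2 hu.1 (by linarith [hu.2]))
    rw [intervalIntegral.integral_const, smul_eq_mul] at this
    exact this
  have hlog10 : 0 ≤ Real.log 10 := Real.log_nonneg (by norm_num)
  constructor
  · positivity
  · have h1 : 1 / s ≤ 1 := by
      rw [div_le_one (by linarith)]; linarith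
    have h3 : (1 / s) * (∫ u in (1:ℝ)..s, wf q₀ u) ≤ 1 * ((s - 1) * Real.log 10) :=
      mul_le_mul h1 hintle hint0 zero_le_one
    nlinarith

lemma A1_decomp (hq : 0 < q₀) (hq2 : q₀ < 1/2) :
    (∫ s in (1:ℝ)..2, (1 / s) * ∫ u in (0:ℝ)..s, gg q₀ u)
      = (∫ u in (0:ℝ)..1, gg q₀ u) * Real.log 2
        + (-Real.log q₀) * (Real.log 2) ^ 2
        + ∫ s in (1:ℝ)..2, (1 / s) * ∫ u in (1:ℝ)..s, wf q₀ u := by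
  have h12 : (1:ℝ) ≤ 2 := one_le_two
  have hcongr : EqOn (fun s : ℝ => (1 / s) * ∫ u in (0:ℝ)..s, gg q₀ u)
      (fun s : ℝ => (∫ u in (0:ℝ)..1, gg q₀ u) * (1 / s)
        + 2 * (-Real.log q₀) * (Real.log s * (1 / s))
        + (1 / s) * ∫ u in (1:ℝ)..s, wf q₀ u) (uIcc (1:ℝ) 2) := by
    intro s hs
    rw [uIcc_of_le h12] at hs
    simp only
    rw [H_eval hq hs.1]
    ring
  rw [intervalIntegral.integral_congr hcongr]
  -- integrability of the pieces
  have hrho_cont : ContinuousOn (fun s : ℝ => ∫ u in (1:ℝ)..s, wf q₀ u) (uIcc (1:ℝ) 2) :=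
    intervalIntegral.continuousOn_primitive_interval'
      (wf_intable hq one_pos two_pos) left_mem_uIcc
  have hinv_cont : ContinuousOn (fun s : ℝ => 1 / s) (uIcc (1:ℝ) 2) := by
    apply ContinuousOn.div continuousOn_const continuousOn_id
    intro x hx
    rw [uIcc_of_le h12] at hx
    exact (by linarith [hx.1] : (0:ℝ) < x).ne'
  have i1 : IntervalIntegrable (fun s : ℝ => (∫ u in (0:ℝ)..1, gg q₀ u) * (1 / s)) volume 1 2 :=
    ((hinv_cont.intervalIntegrable).const_mul _)
  have i2 : IntervalIntegrable
      (fun s : ℝ => 2 * (-Real.log q₀) * (Real.log s * (1 / s))) volume 1 2 := by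
    apply IntervalIntegrable.const_mul
    apply ContinuousOn.intervalIntegrable
    apply ContinuousOn.mul _ hinv_cont
    apply Real.continuousOn_log.mono
    intro x hx
    rw [uIcc_of_le h12] at hx
    exact (by linarith [hx.1] : (0:ℝ) < x).ne'
  have i3 : IntervalIntegrable
      (fun s : ℝ => (1 / s) * ∫ u in (1:ℝ)..s, wf q₀ u) volume 1 2 :=
    (hinv_cont.mul hrho_cont).intervalIntegrable
  rw [intervalIntegral.integral_add (i1.add i2) i3, intervalIntegral.integral_add i1 i2]
  rw [intervalIntegral.integral_const_mul, intervalIntegral.integral_const_mul]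
  have hlog2 : (∫ s in (1:ℝ)..2, 1 / s) = Real.log 2 := by
    rw [integral_one_div (by rw [uIcc_of_le h12]; intro h; linarith [h.1] : (0:ℝ) ∉ uIcc 1 2)]
    norm_num
  have hlogsq : (∫ s in (1:ℝ)..2, Real.log s * (1 / s)) = (Real.log 2) ^ 2 / 2 := by
    have hder : ∀ s ∈ uIcc (1:ℝ) 2,
        HasDerivAt (fun s : ℝ => (Real.log s) ^ 2 / 2) (Real.log s * (1 / s)) s := by
      intro s hs
      rw [uIcc_of_le h12] at hs
      have hs0 : (0:ℝ) < s := by linarith [hs.1]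
      have := ((Real.hasDerivAt_log hs0.ne').pow 2).div_const 2
      refine this.congr_deriv ?_
      simp
      ring
    rw [intervalIntegral.integral_eq_sub_of_hasDerivAt hder ?_]
    · simp [Real.log_one]
    · apply ContinuousOn.intervalIntegrable
      apply ContinuousOn.mul _ hinv_cont
      apply Real.continuousOn_log.mono
      intro x hx
      rw [uIcc_of_le h12] at hx
      exact (by linarith [hx.1] : (0:ℝ) < x).ne'
  rw [hlog2, hlogsq]
  ring


lemma H1_bounds (hq : 0 < q₀) (hq2 : q₀ < 1/2) :
    (-Real.log q₀) ^ 2 ≤ (∫ u in (0:ℝ)..1, gg q₀ u)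
    ∧ (∫ u in (0:ℝ)..1, gg q₀ u) ≤ (-Real.log q₀) ^ 2 + 1 := by
  have hq1 : q₀ < 1 := by linarith
  have hsplit : (∫ u in (0:ℝ)..q₀, gg q₀ u) + (∫ u in q₀..1, gg q₀ u)
      = ∫ u in (0:ℝ)..1, gg q₀ u :=
    intervalIntegral.integral_add_adjacent_intervals (gg_intable0 hq hq.le)
      (gg_intable hq hq one_pos)
  -- part A
  have hA0 : 0 ≤ ∫ u in (0:ℝ)..q₀, gg q₀ u :=
    intervalIntegral.integral_nonneg hq.le (fun u hu => gg_nonneg hq hu.1)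
  have hA1 : (∫ u in (0:ℝ)..q₀, gg q₀ u) ≤ 1/2 := by
    have hm := intervalIntegral.integral_mono_on hq.le (gg_intable0 hq hq.le)
      ((by fun_prop : Continuous fun u : ℝ => u / q₀ ^ 2).intervalIntegrable 0 q₀)
      (fun u hu => gg_le hq hu.1)
    have hval : (∫ u in (0:ℝ)..q₀, u / q₀ ^ 2) = 1/2 := by
      rw [intervalIntegral.integral_div, integral_id]
      field_simp
      ring
    linarith [hm, hval ▸ hm]
  -- part B
  have hBint_rf : IntervalIntegrable (fun u : ℝ => Real.log (1 + q₀ ^ 2 / u ^ 2) / u)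
      volume q₀ 1 := by
    apply ContinuousOn.intervalIntegrable
    rw [uIcc_of_le hq1.le]
    have hne : ∀ x ∈ Icc q₀ 1, x ≠ 0 := fun x hx => (lt_of_lt_of_le hq hx.1).ne'
    apply ContinuousOn.div _ continuousOn_id hne
    apply ContinuousOn.log
    · apply ContinuousOn.add continuousOn_const
      apply ContinuousOn.div continuousOn_const (continuousOn_pow 2)
      intro x hx; exact pow_ne_zero 2 (hne x hx)
    · intro x hx
      have : 0 ≤ q₀ ^ 2 / x ^ 2 := by positivity
      intro h; linarith [h]
  have hBmain : (∫ u in q₀..1, 2 * (Real.log u - Real.log q₀) * (1 / u))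
      = (-Real.log q₀) ^ 2 := by
    have hder : ∀ u ∈ uIcc q₀ 1,
        HasDerivAt (fun u : ℝ => (Real.log u - Real.log q₀) ^ 2)
          (2 * (Real.log u - Real.log q₀) * (1 / u)) u := by
      intro u hu
      rw [uIcc_of_le hq1.le] at hu
      have hu0 : 0 < u := lt_of_lt_of_le hq hu.1
      have := ((Real.hasDerivAt_log hu0.ne').sub_const (Real.log q₀)).pow 2
      refine this.congr_deriv ?_
      simp
    rw [intervalIntegral.integral_eq_sub_of_hasDerivAt hder ?_]
    · simp [Real.log_one]
    · apply ContinuousOn.intervalIntegrable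
      rw [uIcc_of_le hq1.le]
      have hne : ∀ x ∈ Icc q₀ 1, x ≠ 0 := fun x hx => (lt_of_lt_of_le hq hx.1).ne'
      apply ContinuousOn.mul
      · apply ContinuousOn.mul continuousOn_const
        exact (Real.continuousOn_log.mono (fun x hx => hne x hx)).sub continuousOn_const
      · exact ContinuousOn.div continuousOn_const continuousOn_id hne
  have hBdecomp : (∫ u in q₀..1, gg q₀ u)
      = (-Real.log q₀) ^ 2 + ∫ u in q₀..1, Real.log (1 + q₀ ^ 2 / u ^ 2) / u := by
    have hcong : EqOn (gg q₀) (fun u => 2 * (Real.log u - Real.log q₀) * (1 / u)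
        + Real.log (1 + q₀ ^ 2 / u ^ 2) / u) (uIcc q₀ 1) := by
      intro u hu
      rw [uIcc_of_le hq1.le] at hu
      exact gg_decomp2 hq (lt_of_lt_of_le hq hu.1)
    rw [intervalIntegral.integral_congr hcong]
    rw [intervalIntegral.integral_add _ hBint_rf]
    · rw [hBmain]
    · apply ContinuousOn.intervalIntegrable
      rw [uIcc_of_le hq1.le]
      have hne : ∀ x ∈ Icc q₀ 1, x ≠ 0 := fun x hx => (lt_of_lt_of_le hq hx.1).ne'
      apply ContinuousOn.mul
      · apply ContinuousOn.mul continuousOn_const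
        exact (Real.continuousOn_log.mono (fun x hx => hne x hx)).sub continuousOn_const
      · exact ContinuousOn.div continuousOn_const continuousOn_id hne
  have hrf0 : 0 ≤ ∫ u in q₀..1, Real.log (1 + q₀ ^ 2 / u ^ 2) / u := by
    apply intervalIntegral.integral_nonneg hq1.le
    intro u hu
    have hu0 : 0 < u := lt_of_lt_of_le hq hu.1
    apply div_nonneg _ hu0.le
    apply Real.log_nonneg
    have : 0 ≤ q₀ ^ 2 / u ^ 2 := by positivity
    linarith
  have hrf1 : (∫ u in q₀..1, Real.log (1 + q₀ ^ 2 / u ^ 2) / u) ≤ 1/2 := by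
    have hBint : IntervalIntegrable (fun u : ℝ => q₀ ^ 2 / u ^ 3) volume q₀ 1 := by
      apply ContinuousOn.intervalIntegrable
      rw [uIcc_of_le hq1.le]
      apply ContinuousOn.div continuousOn_const (continuousOn_pow 3)
      intro x hx; exact pow_ne_zero 3 (lt_of_lt_of_le hq hx.1).ne'
    have hm := intervalIntegral.integral_mono_on hq1.le hBint_rf hBint ?_
    · have hval : (∫ u in q₀..1, q₀ ^ 2 / u ^ 3) = 1/2 - q₀ ^ 2 / 2 := by
        have hder : ∀ u ∈ uIcc q₀ 1,
            HasDerivAt (fun u : ℝ => -(q₀ ^ 2 / 2) * (u ^ 2)⁻¹) (q₀ ^ 2 / u ^ 3) u := by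
          intro u hu
          rw [uIcc_of_le hq1.le] at hu
          have hu0 : 0 < u := lt_of_lt_of_le hq hu.1
          have h2 : HasDerivAt (fun u : ℝ => (u ^ 2)⁻¹)
              (-(2 * u ^ 1) / (u ^ 2) ^ 2) u := (hasDerivAt_pow 2 u).inv (by positivity)
          have := h2.const_mul (-(q₀ ^ 2 / 2))
          refine this.congr_deriv ?_
          field_simp
        rw [intervalIntegral.integral_eq_sub_of_hasDerivAt hder hBint]
        have : q₀ ^ 2 ≠ 0 := by positivity
        field_simp
        ring
      rw [hval] at hm
      nlinarith [sq_nonneg q₀]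
    · intro u hu
      have hu0 : 0 < u := lt_of_lt_of_le hq hu.1
      have h1 : Real.log (1 + q₀ ^ 2 / u ^ 2) ≤ q₀ ^ 2 / u ^ 2 :=
        log_one_add_le (by positivity)
      calc Real.log (1 + q₀ ^ 2 / u ^ 2) / u ≤ (q₀ ^ 2 / u ^ 2) / u :=
            (div_le_div_iff_of_pos_right hu0).mpr h1
        _ = q₀ ^ 2 / u ^ 3 := by
            rw [div_div, ← pow_succ]
  constructor
  · nlinarith [hsplit, hA0, hBdecomp, hrf0]
  · nlinarith [hsplit, hA1, hBdecomp, hrf1]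

lemma int_rho (hq : 0 < q₀) : IntervalIntegrable
    (fun s : ℝ => (1 / s) * ∫ u in (1:ℝ)..s, wf q₀ u) volume 1 2 := by
  have h12 : (1:ℝ) ≤ 2 := one_le_two
  have hrho_cont : ContinuousOn (fun s : ℝ => ∫ u in (1:ℝ)..s, wf q₀ u) (uIcc (1:ℝ) 2) :=
    intervalIntegral.continuousOn_primitive_interval'
      (wf_intable hq one_pos two_pos) left_mem_uIcc
  have hinv_cont : ContinuousOn (fun s : ℝ => 1 / s) (uIcc (1:ℝ) 2) := by
    apply ContinuousOn.div continuousOn_const continuousOn_id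
    intro x hx
    rw [uIcc_of_le h12] at hx
    exact (by linarith [hx.1] : (0:ℝ) < x).ne'
  exact (hinv_cont.mul hrho_cont).intervalIntegrable

lemma Rrho_bounds (hq : 0 < q₀) (hq2 : q₀ < 1/2) :
    0 ≤ (∫ s in (1:ℝ)..2, (1 / s) * ∫ u in (1:ℝ)..s, wf q₀ u)
    ∧ (∫ s in (1:ℝ)..2, (1 / s) * ∫ u in (1:ℝ)..s, wf q₀ u) ≤ Real.log 10 := by
  constructor
  · apply intervalIntegral.integral_nonneg one_le_two
    intro s hs
    exact (rho_bounds hq hq2 hs.1 hs.2).1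
  · have hm := intervalIntegral.integral_mono_on one_le_two (int_rho hq)
      (intervalIntegrable_const (c := Real.log 10))
      (fun s hs => (rho_bounds hq hq2 hs.1 hs.2).2)
    rw [intervalIntegral.integral_const, smul_eq_mul] at hm
    linarith

lemma A3_bounds (hq : 0 < q₀) (hq2 : q₀ < 1/2) :
    0 ≤ (∫ v in (0:ℝ)..1, (1 / v) * ∫ u in (1 + v)..(1 + 2 * v), wf q₀ u)
    ∧ (∫ v in (0:ℝ)..1, (1 / v) * ∫ u in (1 + v)..(1 + 2 * v), wf q₀ u) ≤ Real.log 10 := by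
  constructor
  · apply intervalIntegral.integral_nonneg zero_le_one
    intro v hv
    rcases eq_or_lt_of_le hv.1 with h | h
    · rw [← h]
      norm_num
    · exact (W_bound hq hq2 h hv.2).1
  · have hm := intervalIntegral.integral_mono_on zero_le_one (int_c hq hq2)
      (intervalIntegrable_const (c := Real.log 10)) ?_
    · rw [intervalIntegral.integral_const, smul_eq_mul] at hm
      linarith
    · intro v hv
      rcases eq_or_lt_of_le hv.1 with h | h
      · rw [← h]
        norm_num
        exact Real.log_nonneg (by norm_num)
      · exact (W_bound hq hq2 h hv.2).2

end Stmt8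


/-- **Asymptotics of `I(q₀)`.** There is a constant `A > 0` such that for all
`0 < q₀ < 1/2`, `|I(q₀) - 2 log 2 (log q₀)² - C₁ |log q₀|| ≤ A`, where
`C₁ = 2 (log 2)² - 4 ∫₀¹ (1/x) log((1+2x)/(1+x)) dx`. -/
theorem stmt_8 :
    ∃ A : ℝ, 0 < A ∧ ∀ q₀ : ℝ, 0 < q₀ → q₀ < 1 / 2 →
      |Ifun q₀ - 2 * Real.log 2 * (Real.log q₀) ^ 2 -
          (2 * (Real.log 2) ^ 2 -
            4 * ∫ x in (0 : ℝ)..1, (1 / x) * Real.log ((1 + 2 * x) / (1 + x))) *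
            abs (Real.log q₀)| ≤ A := by
  refine ⟨100, by norm_num, fun q₀ hq hq2 => ?_⟩
  have hlogneg : Real.log q₀ < 0 := Real.log_neg hq (by linarith)
  rw [abs_of_neg hlogneg]
  have key : Ifun q₀ = 2 * ((((∫ u in (0:ℝ)..1, Stmt8.gg q₀ u) * Real.log 2
      + (-Real.log q₀) * (Real.log 2) ^ 2
      + ∫ s in (1:ℝ)..2, (1 / s) * ∫ u in (1:ℝ)..s, Stmt8.wf q₀ u))
      - 2 * (-Real.log q₀) * (∫ x in (0:ℝ)..1, (1 / x) * Real.log ((1 + 2 * x) / (1 + x)))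
      - ∫ v in (0:ℝ)..1, (1 / v) * ∫ u in (1 + v)..(1 + 2 * v), Stmt8.wf q₀ u) := by
    have h0 : Ifun q₀ = Stmt8.Ifun' q₀ := rfl
    rw [h0, Stmt8.Ifun_eq_double hq, Stmt8.fubini1 hq, Stmt8.v_split hq hq2,
      Stmt8.A1_eval hq, Stmt8.A1_decomp hq hq2]
  obtain ⟨hE0, hE1⟩ := Stmt8.H1_bounds hq hq2
  obtain ⟨hR0, hR1⟩ := Stmt8.Rrho_bounds hq hq2
  obtain ⟨hA0, hA1⟩ := Stmt8.A3_bounds hq hq2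
  have hlog2a : (0:ℝ) ≤ Real.log 2 := Real.log_nonneg one_le_two
  have hlog2b : Real.log 2 ≤ 1 := by
    linarith [Real.log_le_sub_one_of_pos (by norm_num : (0:ℝ) < 2)]
  have hlog10 : Real.log 10 ≤ 9 := by
    linarith [Real.log_le_sub_one_of_pos (by norm_num : (0:ℝ) < 10)]
  have hprod0 : 0 ≤ Real.log 2 * ((∫ u in (0:ℝ)..1, Stmt8.gg q₀ u) - (-Real.log q₀) ^ 2) :=
    mul_nonneg hlog2a (by linarith)
  have hprod1 : Real.log 2 * ((∫ u in (0:ℝ)..1, Stmt8.gg q₀ u) - (-Real.log q₀) ^ 2) ≤ 1 := by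
    nlinarith
  rw [key, abs_le]
  constructor <;> nlinarith [hprod0, hprod1, hR0, hR1, hA0, hA1, hlog10]
end

section
/- For every β > 0 and every q₀ ∈ ℝ with q₀ ≠ 0, the function (ξ, η) ↦ Σ₂(β, q₀, ξ, η) is differentiable at (0, 0) and its gradient there vanishes: ∂Σ₂/∂ξ (β, q₀, 0, 0) = 0 and ∂Σ₂/∂η (β, q₀, 0, 0) = 0. -/
/-- The Fermi function `f_β(E) = 1/(1 + e^{βE})`. -/
noncomputable def fermi (β E : ℝ) : ℝ := 1 / (1 + Real.exp (β * E))

/-- The second-order self-energy of the `xy`-model at inverse temperature `β`,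
frequency `q₀` and spatial momentum `(ξ, η)`:
`Σ₂(β, q₀, ξ, η) = -∫_{[-1,1]⁴} [f_β(E₁)(f_β(E₂) - f_β(E₃)) + f_β(E₂)(f_β(E₃) - 1)]
  / (i q₀ + E₂ - E₃ - E₁)` with `E₁ = (ξ+x-x')(η+y-y')`, `E₂ = xy`, `E₃ = x'y'`. -/
noncomputable def Sigma2 (β q₀ ξ η : ℝ) : ℂ :=
  - ∫ x in (-1 : ℝ)..1, ∫ y in (-1 : ℝ)..1, ∫ x' in (-1 : ℝ)..1, ∫ y' in (-1 : ℝ)..1,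
      ((fermi β ((ξ + x - x') * (η + y - y')) * (fermi β (x * y) - fermi β (x' * y'))
          + fermi β (x * y) * (fermi β (x' * y') - 1) : ℝ) : ℂ) /
        (Complex.I * (q₀ : ℂ) +
          ((x * y - x' * y' - (ξ + x - x') * (η + y - y') : ℝ) : ℂ))

section Stmt12Aux

open MeasureTheory

lemma contDiff_fermi (β : ℝ) : ContDiff ℝ (⊤ : ℕ∞) (fermi β) := by
  unfold fermi
  exact ContDiff.div contDiff_const
    (contDiff_const.add (Real.contDiff_exp.comp (contDiff_const.mul contDiff_id)))
    (fun x => by positivity)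

lemma fermi_pos (β E : ℝ) : 0 < fermi β E := by unfold fermi; positivity

lemma fermi_lt_one (β E : ℝ) : fermi β E < 1 := by
  unfold fermi
  rw [div_lt_one (by positivity)]
  have := Real.exp_pos (β * E); linarith

namespace Stmt12

/-- The integrand of `Sigma2` as a function of all variables. -/
noncomputable def Ig (β q₀ ξ η x y x' y' : ℝ) : ℂ :=
  ((fermi β ((ξ + x - x') * (η + y - y')) * (fermi β (x * y) - fermi β (x' * y'))
      + fermi β (x * y) * (fermi β (x' * y') - 1) : ℝ) : ℂ) /
    (Complex.I * (q₀ : ℂ) +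
      ((x * y - x' * y' - (ξ + x - x') * (η + y - y') : ℝ) : ℂ))

lemma Sigma2_eq_Ig (β q₀ ξ η : ℝ) :
    Sigma2 β q₀ ξ η =
      - ∫ x in (-1 : ℝ)..1, ∫ y in (-1 : ℝ)..1, ∫ x' in (-1 : ℝ)..1, ∫ y' in (-1 : ℝ)..1,
        Ig β q₀ ξ η x y x' y' := rfl

lemma Ig_neg (β q₀ ξ η x y x' y' : ℝ) :
    Ig β q₀ ξ η (-x) (-y) (-x') (-y') = Ig β q₀ (-ξ) (-η) x y x' y' := by
  unfold Ig
  have e1 : (ξ + -x - -x') * (η + -y - -y') = (-ξ + x - x') * (-η + y - y') := by ring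
  have e2 : (-x) * (-y) = x * y := by ring
  have e3 : (-x') * (-y') = x' * y' := by ring
  rw [e1, e2, e3]

/-- Flip of a single interval integral over `[-1,1]`. -/
lemma flip (F : ℝ → ℂ) :
    (∫ x in (-1 : ℝ)..1, F (-x)) = ∫ x in (-1 : ℝ)..1, F x := by
  rw [intervalIntegral.integral_comp_neg F]; norm_num

/-- Symmetry of `Sigma2` under `(ξ, η) ↦ (-ξ, -η)`. -/
lemma Sigma2_neg (β q₀ ξ η : ℝ) : Sigma2 β q₀ (-ξ) (-η) = Sigma2 β q₀ ξ η := by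
  rw [Sigma2_eq_Ig, Sigma2_eq_Ig]
  congr 1
  have l1 : ∀ x y x' : ℝ,
      (∫ y' in (-1 : ℝ)..1, Ig β q₀ ξ η (-x) (-y) (-x') (-y')) =
        ∫ y' in (-1 : ℝ)..1, Ig β q₀ ξ η (-x) (-y) (-x') y' :=
    fun x y x' => flip (fun y' => Ig β q₀ ξ η (-x) (-y) (-x') y')
  have l2 : ∀ x y : ℝ,
      (∫ x' in (-1 : ℝ)..1, ∫ y' in (-1 : ℝ)..1, Ig β q₀ ξ η (-x) (-y) (-x') y') =
        ∫ x' in (-1 : ℝ)..1, ∫ y' in (-1 : ℝ)..1, Ig β q₀ ξ η (-x) (-y) x' y' :=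
    fun x y => flip (fun x' => ∫ y' in (-1 : ℝ)..1, Ig β q₀ ξ η (-x) (-y) x' y')
  have l3 : ∀ x : ℝ,
      (∫ y in (-1 : ℝ)..1, ∫ x' in (-1 : ℝ)..1, ∫ y' in (-1 : ℝ)..1,
          Ig β q₀ ξ η (-x) (-y) x' y') =
        ∫ y in (-1 : ℝ)..1, ∫ x' in (-1 : ℝ)..1, ∫ y' in (-1 : ℝ)..1,
          Ig β q₀ ξ η (-x) y x' y' :=
    fun x => flip (fun y => ∫ x' in (-1 : ℝ)..1, ∫ y' in (-1 : ℝ)..1,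
      Ig β q₀ ξ η (-x) y x' y')
  have l4 :
      (∫ x in (-1 : ℝ)..1, ∫ y in (-1 : ℝ)..1, ∫ x' in (-1 : ℝ)..1, ∫ y' in (-1 : ℝ)..1,
          Ig β q₀ ξ η (-x) y x' y') =
        ∫ x in (-1 : ℝ)..1, ∫ y in (-1 : ℝ)..1, ∫ x' in (-1 : ℝ)..1, ∫ y' in (-1 : ℝ)..1,
          Ig β q₀ ξ η x y x' y' :=
    flip (fun x => ∫ y in (-1 : ℝ)..1, ∫ x' in (-1 : ℝ)..1, ∫ y' in (-1 : ℝ)..1,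
      Ig β q₀ ξ η x y x' y')
  calc (∫ x in (-1 : ℝ)..1, ∫ y in (-1 : ℝ)..1, ∫ x' in (-1 : ℝ)..1, ∫ y' in (-1 : ℝ)..1,
          Ig β q₀ (-ξ) (-η) x y x' y')
      = ∫ x in (-1 : ℝ)..1, ∫ y in (-1 : ℝ)..1, ∫ x' in (-1 : ℝ)..1, ∫ y' in (-1 : ℝ)..1,
          Ig β q₀ ξ η (-x) (-y) (-x') (-y') := by simp_rw [Ig_neg]
    _ = ∫ x in (-1 : ℝ)..1, ∫ y in (-1 : ℝ)..1, ∫ x' in (-1 : ℝ)..1, ∫ y' in (-1 : ℝ)..1,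
          Ig β q₀ ξ η x y x' y' := by simp_rw [l1, l2, l3, l4]

/-- The integrand as a jointly smooth function of parameters and integration variables. -/
noncomputable def Phi (β q₀ : ℝ) (q : (ℝ × ℝ) × ℝ × ℝ × ℝ × ℝ) : ℂ :=
  Ig β q₀ q.1.1 q.1.2 q.2.1 q.2.2.1 q.2.2.2.1 q.2.2.2.2

lemma contDiff_Phi (β q₀ : ℝ) (hq₀ : q₀ ≠ 0) : ContDiff ℝ (⊤ : ℕ∞) (Phi β q₀) := by
  unfold Phi Ig
  have h := contDiff_fermi β
  have hE1 : ContDiff ℝ (⊤ : ℕ∞) (fun q : (ℝ × ℝ) × ℝ × ℝ × ℝ × ℝ =>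
      (q.1.1 + q.2.1 - q.2.2.2.1) * (q.1.2 + q.2.2.1 - q.2.2.2.2)) := by fun_prop
  have hE2 : ContDiff ℝ (⊤ : ℕ∞) (fun q : (ℝ × ℝ) × ℝ × ℝ × ℝ × ℝ =>
      q.2.1 * q.2.2.1) := by fun_prop
  have hE3 : ContDiff ℝ (⊤ : ℕ∞) (fun q : (ℝ × ℝ) × ℝ × ℝ × ℝ × ℝ =>
      q.2.2.2.1 * q.2.2.2.2) := by fun_prop
  simp only [div_eq_mul_inv]
  apply ContDiff.mul
  · apply Complex.ofRealCLM.contDiff.comp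
    exact ((h.comp hE1).mul ((h.comp hE2).sub (h.comp hE3))).add
      ((h.comp hE2).mul ((h.comp hE3).sub contDiff_const))
  · apply ContDiff.inv
    · apply ContDiff.add contDiff_const
      exact Complex.ofRealCLM.contDiff.comp ((hE2.sub hE3).sub hE1)
    · intro q h
      apply hq₀
      have := congrArg Complex.im h
      simpa using this

lemma norm_Ig_le (β q₀ : ℝ) (hq₀ : q₀ ≠ 0) (ξ η x y x' y' : ℝ) :
    ‖Ig β q₀ ξ η x y x' y'‖ ≤ 2 / |q₀| := by
  unfold Ig
  rw [norm_div]
  have hq : (0:ℝ) < |q₀| := abs_pos.mpr hq₀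
  have hden : |q₀| ≤ ‖Complex.I * (q₀ : ℂ) +
      ((x * y - x' * y' - (ξ + x - x') * (η + y - y') : ℝ) : ℂ)‖ := by
    have := Complex.abs_im_le_norm (Complex.I * (q₀ : ℂ) +
      ((x * y - x' * y' - (ξ + x - x') * (η + y - y') : ℝ) : ℂ))
    simpa using this
  have hnum : ‖((fermi β ((ξ + x - x') * (η + y - y')) * (fermi β (x * y) - fermi β (x' * y'))
      + fermi β (x * y) * (fermi β (x' * y') - 1) : ℝ) : ℂ)‖ ≤ 2 := by
    rw [Complex.norm_real]
    rw [Real.norm_eq_abs, abs_le]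
    have h1 := fermi_pos β ((ξ + x - x') * (η + y - y'))
    have h2 := fermi_pos β (x * y)
    have h3 := fermi_pos β (x' * y')
    have h4 := fermi_lt_one β ((ξ + x - x') * (η + y - y'))
    have h5 := fermi_lt_one β (x * y)
    have h6 := fermi_lt_one β (x' * y')
    constructor <;> nlinarith
  exact div_le_div₀ (by norm_num) hnum hq hden

lemma norm_Phi_le (β q₀ : ℝ) (hq₀ : q₀ ≠ 0) (q : (ℝ × ℝ) × ℝ × ℝ × ℝ × ℝ) :
    ‖Phi β q₀ q‖ ≤ 2 / |q₀| := norm_Ig_le β q₀ hq₀ _ _ _ _ _ _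

/-- The restricted Lebesgue measure on `(-1, 1]`. -/
noncomputable def mu : Measure ℝ := volume.restrict (Set.Ioc (-1 : ℝ) 1)

instance : IsFiniteMeasure mu := by
  unfold mu
  exact ⟨by rw [Measure.restrict_apply_univ]; exact measure_Ioc_lt_top⟩

/-- The product measure on `(-1,1]⁴`. -/
noncomputable def mu4 : Measure (ℝ × ℝ × ℝ × ℝ) := mu.prod (mu.prod (mu.prod mu))

instance : IsFiniteMeasure mu4 := by unfold mu4; infer_instance

lemma Sigma2_eq_int (β q₀ : ℝ) (hq₀ : q₀ ≠ 0) (p : ℝ × ℝ) :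
    Sigma2 β q₀ p.1 p.2 = - ∫ z, Phi β q₀ (p, z) ∂mu4 := by
  have hle : (-1:ℝ) ≤ 1 := by norm_num
  have hcont : Continuous (Phi β q₀) := (contDiff_Phi β q₀ hq₀).continuous
  have hb := norm_Phi_le β q₀ hq₀
  have i1 : ∀ x y : ℝ,
      Integrable (fun w : ℝ × ℝ => Phi β q₀ (p, (x, (y, w)))) (mu.prod mu) := by
    intro x y
    refine (integrable_const (2 / |q₀|)).mono' ?_ (Filter.Eventually.of_forall fun w => hb _)
    exact (hcont.comp (by fun_prop)).aestronglyMeasurable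
  have i2 : ∀ x : ℝ,
      Integrable (fun w : ℝ × ℝ × ℝ => Phi β q₀ (p, (x, w))) (mu.prod (mu.prod mu)) := by
    intro x
    refine (integrable_const (2 / |q₀|)).mono' ?_ (Filter.Eventually.of_forall fun w => hb _)
    exact (hcont.comp (by fun_prop)).aestronglyMeasurable
  have i3 : Integrable (fun z : ℝ × ℝ × ℝ × ℝ => Phi β q₀ (p, z)) mu4 := by
    refine (integrable_const (2 / |q₀|)).mono' ?_ (Filter.Eventually.of_forall fun w => hb _)
    exact (hcont.comp (by fun_prop)).aestronglyMeasurable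
  have s1 : ∀ x y : ℝ,
      (∫ x', (∫ y', Phi β q₀ (p, (x, (y, (x', y')))) ∂mu) ∂mu) =
        ∫ w, Phi β q₀ (p, (x, (y, w))) ∂(mu.prod mu) :=
    fun x y => (integral_prod _ (i1 x y)).symm
  have s2 : ∀ x : ℝ,
      (∫ y, (∫ w, Phi β q₀ (p, (x, (y, w))) ∂(mu.prod mu)) ∂mu) =
        ∫ w, Phi β q₀ (p, (x, w)) ∂(mu.prod (mu.prod mu)) :=
    fun x => (integral_prod _ (i2 x)).symm
  have s3 : (∫ x, (∫ w, Phi β q₀ (p, (x, w)) ∂(mu.prod (mu.prod mu))) ∂mu) =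
      ∫ z, Phi β q₀ (p, z) ∂mu4 :=
    (integral_prod _ i3).symm
  have c0 : (∫ x in (-1:ℝ)..1, ∫ y in (-1:ℝ)..1, ∫ x' in (-1:ℝ)..1, ∫ y' in (-1:ℝ)..1,
        Ig β q₀ p.1 p.2 x y x' y') =
      ∫ x, (∫ y, (∫ x', (∫ y', Phi β q₀ (p, (x, (y, (x', y')))) ∂mu) ∂mu) ∂mu) ∂mu := by
    simp_rw [intervalIntegral.integral_of_le hle]
    rfl
  rw [Sigma2_eq_Ig]
  congr 1
  rw [c0]
  simp_rw [s1, s2]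
  exact s3

lemma hasFDeriv_int (β q₀ : ℝ) (hq₀ : q₀ ≠ 0) :
    HasFDerivAt (fun p : ℝ × ℝ => ∫ z, Phi β q₀ (p, z) ∂mu4)
      (∫ z, (fderiv ℝ (Phi β q₀) (((0:ℝ), (0:ℝ)), z)).comp
        (ContinuousLinearMap.inl ℝ (ℝ × ℝ) (ℝ × ℝ × ℝ × ℝ)) ∂mu4)
      ((0:ℝ), (0:ℝ)) := by
  have hsmooth := contDiff_Phi β q₀ hq₀
  have hcont : Continuous (Phi β q₀) := hsmooth.continuous
  have hone : (1 : WithTop ℕ∞) ≤ ((⊤ : ℕ∞) : WithTop ℕ∞) := by exact_mod_cast le_top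
  have hfd : Continuous (fderiv ℝ (Phi β q₀)) := hsmooth.continuous_fderiv (ENat.one_le_iff_ne_zero_withTop.mp hone)
  have hK : IsCompact ((Metric.closedBall ((0,0) : ℝ × ℝ) 1) ×ˢ
      ((Set.Icc (-1:ℝ) 1) ×ˢ ((Set.Icc (-1:ℝ) 1) ×ˢ ((Set.Icc (-1:ℝ) 1) ×ˢ (Set.Icc (-1:ℝ) 1))))) :=
    (isCompact_closedBall _ _).prod (isCompact_Icc.prod (isCompact_Icc.prod
      (isCompact_Icc.prod isCompact_Icc)))
  obtain ⟨C, hC⟩ := hK.exists_bound_of_continuousOn hfd.continuousOn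
  have hC0 : 0 ≤ C := by
    refine le_trans (norm_nonneg _) (hC (((0,0)), (0, (0, (0, 0)))) ?_)
    refine ⟨Metric.mem_closedBall_self (by norm_num),
      Set.mem_Icc.mpr (by norm_num), Set.mem_Icc.mpr (by norm_num),
      Set.mem_Icc.mpr (by norm_num), Set.mem_Icc.mpr (by norm_num)⟩
  apply hasFDerivAt_integral_of_dominated_of_fderiv_le (s := Metric.ball ((0:ℝ), (0:ℝ)) 1)
    (bound := fun _ => C)
    (F' := fun (p : ℝ × ℝ) (z : ℝ × ℝ × ℝ × ℝ) => (fderiv ℝ (Phi β q₀) (p, z)).comp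
      (ContinuousLinearMap.inl ℝ (ℝ × ℝ) (ℝ × ℝ × ℝ × ℝ))) (Metric.ball_mem_nhds _ one_pos)
  · exact Filter.Eventually.of_forall fun p =>
      (hcont.comp (by fun_prop : Continuous fun z : ℝ × ℝ × ℝ × ℝ => (p, z))).aestronglyMeasurable
  · exact (integrable_const (2 / |q₀|)).mono'
      (hcont.comp (by fun_prop : Continuous fun z : ℝ × ℝ × ℝ × ℝ => (((0:ℝ),(0:ℝ)), z))).aestronglyMeasurable
      (Filter.Eventually.of_forall fun z => norm_Phi_le β q₀ hq₀ _)
  · exact (Continuous.clm_comp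
      (hfd.comp (by fun_prop : Continuous fun z : ℝ × ℝ × ℝ × ℝ => (((0:ℝ),(0:ℝ)), z)))
      continuous_const).aestronglyMeasurable
  · have hmem : ∀ᵐ z ∂mu4, z ∈ (Set.Ioc (-1:ℝ) 1) ×ˢ
        ((Set.Ioc (-1:ℝ) 1) ×ˢ ((Set.Ioc (-1:ℝ) 1) ×ˢ (Set.Ioc (-1:ℝ) 1))) := by
      have hmu4 : mu4 = (volume.prod (volume.prod (volume.prod volume))).restrict
          ((Set.Ioc (-1:ℝ) 1) ×ˢ ((Set.Ioc (-1:ℝ) 1) ×ˢ ((Set.Ioc (-1:ℝ) 1) ×ˢ (Set.Ioc (-1:ℝ) 1)))) := by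
        unfold mu4 mu
        rw [Measure.prod_restrict, Measure.prod_restrict, Measure.prod_restrict]
      rw [hmu4]
      exact ae_restrict_mem (measurableSet_Ioc.prod (measurableSet_Ioc.prod
        (measurableSet_Ioc.prod measurableSet_Ioc)))
    refine hmem.mono fun z hz p hp => ?_
    have hzI : z ∈ (Set.Icc (-1:ℝ) 1) ×ˢ
        ((Set.Icc (-1:ℝ) 1) ×ˢ ((Set.Icc (-1:ℝ) 1) ×ˢ (Set.Icc (-1:ℝ) 1))) :=
      ⟨Set.Ioc_subset_Icc_self hz.1, Set.Ioc_subset_Icc_self hz.2.1,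
        Set.Ioc_subset_Icc_self hz.2.2.1, Set.Ioc_subset_Icc_self hz.2.2.2⟩
    have hmemK : (p, z) ∈ (Metric.closedBall ((0,0) : ℝ × ℝ) 1) ×ˢ
        ((Set.Icc (-1:ℝ) 1) ×ˢ ((Set.Icc (-1:ℝ) 1) ×ˢ ((Set.Icc (-1:ℝ) 1) ×ˢ (Set.Icc (-1:ℝ) 1)))) :=
      ⟨Metric.ball_subset_closedBall hp, hzI⟩
    apply ContinuousLinearMap.opNorm_le_bound _ hC0
    intro v
    have hnorm : ‖(ContinuousLinearMap.inl ℝ (ℝ × ℝ) (ℝ × ℝ × ℝ × ℝ)) v‖ = ‖v‖ := by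
      simp [Prod.norm_def]
    calc ‖(fderiv ℝ (Phi β q₀) (p, z))
            ((ContinuousLinearMap.inl ℝ (ℝ × ℝ) (ℝ × ℝ × ℝ × ℝ)) v)‖
        ≤ ‖fderiv ℝ (Phi β q₀) (p, z)‖ * ‖v‖ := by
          rw [← hnorm]; exact (fderiv ℝ (Phi β q₀) (p, z)).le_opNorm _
      _ ≤ C * ‖v‖ := mul_le_mul_of_nonneg_right (hC (p, z) hmemK) (norm_nonneg v)
  · exact integrable_const C
  · refine Filter.Eventually.of_forall fun z p hp => ?_
    have h1 : HasFDerivAt (Phi β q₀) (fderiv ℝ (Phi β q₀) (p, z)) (p, z) :=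
      ((hsmooth.differentiable (ENat.one_le_iff_ne_zero_withTop.mp hone)).differentiableAt).hasFDerivAt
    exact h1.comp p (f := fun e : ℝ × ℝ => (e, z)) (hasFDerivAt_prodMk_left p z)

end Stmt12

end Stmt12Aux

/-- **Vanishing of the spatial gradient.** For every `β > 0` and `q₀ ≠ 0`, the map
`(ξ, η) ↦ Σ₂(β, q₀, ξ, η)` is differentiable at `(0, 0)` with vanishing derivative;
in particular `∂Σ₂/∂ξ (β, q₀, 0, 0) = 0` and `∂Σ₂/∂η (β, q₀, 0, 0) = 0`. -/
theorem stmt_12 (β q₀ : ℝ) (hβ : 0 < β) (hq₀ : q₀ ≠ 0) :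
    HasFDerivAt (fun p : ℝ × ℝ => Sigma2 β q₀ p.1 p.2)
      (0 : ℝ × ℝ →L[ℝ] ℂ) (0, 0) := by
  open Stmt12 MeasureTheory in
  set L : ℝ × ℝ →L[ℝ] ℂ :=
    -(∫ z, (fderiv ℝ (Phi β q₀) (((0:ℝ), (0:ℝ)), z)).comp
        (ContinuousLinearMap.inl ℝ (ℝ × ℝ) (ℝ × ℝ × ℝ × ℝ)) ∂mu4) with hLdef
  have heqfun : (fun p : ℝ × ℝ => Sigma2 β q₀ p.1 p.2) =
      fun p : ℝ × ℝ => - ∫ z, Phi β q₀ (p, z) ∂mu4 :=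
    funext fun p => Sigma2_eq_int β q₀ hq₀ p
  have hL : HasFDerivAt (fun p : ℝ × ℝ => Sigma2 β q₀ p.1 p.2) L (0, 0) := by
    rw [heqfun, hLdef]
    exact (hasFDeriv_int β q₀ hq₀).neg
  have hnegmap : HasFDerivAt (fun p : ℝ × ℝ => -p)
      (-(ContinuousLinearMap.id ℝ (ℝ × ℝ))) ((0, 0) : ℝ × ℝ) :=
    (ContinuousLinearMap.id ℝ (ℝ × ℝ)).hasFDerivAt.neg
  have hL' : HasFDerivAt (fun p : ℝ × ℝ => Sigma2 β q₀ p.1 p.2)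
      L (-((0, 0) : ℝ × ℝ)) := by simpa using hL
  have h2 : HasFDerivAt (fun p : ℝ × ℝ => Sigma2 β q₀ (-p).1 (-p).2)
      (L.comp (-(ContinuousLinearMap.id ℝ (ℝ × ℝ)))) (0, 0) :=
    hL'.comp (0, 0) hnegmap
  have h3 : (fun p : ℝ × ℝ => Sigma2 β q₀ (-p).1 (-p).2) =
      fun p : ℝ × ℝ => Sigma2 β q₀ p.1 p.2 :=
    funext fun p => by simpa using Sigma2_neg β q₀ p.1 p.2
  rw [h3] at h2
  have hcomp : L.comp (-(ContinuousLinearMap.id ℝ (ℝ × ℝ))) = -L := by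
    apply ContinuousLinearMap.ext; intro v; simp
  rw [hcomp] at h2
  have huniq : L = -L := hL.unique h2
  have hL0 : L = 0 := by
    apply ContinuousLinearMap.ext; intro v
    have hv : L v = -(L v) := by
      nth_rewrite 1 [huniq]
      simp
    simpa using (by linear_combination hv / 2 : L v = 0)
  rw [hL0] at hL
  exact hL
end
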